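/- arXiv:1306.0729 — 8 statements merged into one kernel-verified Lean document; each statement's English description precedes it below -/
import Mathlib

section
/- A nonnegative n×n matrix A (n ≥ 2) is primitive (some power of A is entrywise positive) if and only if A^(n²-2n+2) is entrywise positive. -/
open Finset

namespace Stmt0Aux

variable {n : ℕ} {A : Matrix (Fin n) (Fin n) ℝ}

lemma powNN (hA : ∀ i j, 0 ≤ A i j) : ∀ (m : ℕ) (i j : Fin n), 0 ≤ (A ^ m) i j := by
  intro m
  induction m with
  | zero =>
    intro i j
    rw [pow_zero]
    by_cases h : i = j
    · subst h; simp
    · simp [Matrix.one_apply_ne h]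
  | succ m ih =>
    intro i j
    rw [pow_succ, Matrix.mul_apply]
    exact Finset.sum_nonneg fun x _ => mul_nonneg (ih i x) (hA x j)

lemma posMul (hA : ∀ i j, 0 ≤ A i j) {a b : ℕ} {i l j : Fin n}
    (h1 : 0 < (A ^ a) i l) (h2 : 0 < (A ^ b) l j) : 0 < (A ^ (a + b)) i j := by
  rw [pow_add, Matrix.mul_apply]
  exact Finset.sum_pos' (fun x _ => mul_nonneg (powNN hA a i x) (powNN hA b x j))
    ⟨l, Finset.mem_univ l, mul_pos h1 h2⟩

lemma posSplit (hA : ∀ i j, 0 ≤ A i j) {a b : ℕ} {i j : Fin n}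
    (h : 0 < (A ^ (a + b)) i j) : ∃ l, 0 < (A ^ a) i l ∧ 0 < (A ^ b) l j := by
  by_contra hc
  push_neg at hc
  rw [pow_add, Matrix.mul_apply] at h
  have h0 : ∀ x ∈ Finset.univ, (A ^ a) i x * (A ^ b) x j ≤ 0 := by
    intro x _
    rcases lt_or_ge 0 ((A ^ a) i x) with hx | hx
    · exact mul_nonpos_of_nonneg_of_nonpos (le_of_lt hx) (hc x hx)
    · exact mul_nonpos_of_nonpos_of_nonneg hx (powNN hA b x j)
  exact absurd h (not_lt.2 (Finset.sum_nonpos h0))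

lemma chainOf (hA : ∀ i j, 0 ≤ A i j) (s : ℕ) :
    ∀ (m : ℕ) (i j : Fin n), 0 < (A ^ (s * m)) i j →
    ∃ v : ℕ → Fin n, v 0 = i ∧ v m = j ∧ ∀ t < m, 0 < (A ^ s) (v t) (v (t + 1)) := by
  intro m
  induction m with
  | zero =>
    intro i j h
    rw [Nat.mul_zero, pow_zero] at h
    have hij : i = j := by
      by_contra hne
      rw [Matrix.one_apply_ne hne] at h
      exact lt_irrefl 0 h
    subst hij
    exact ⟨fun _ => i, rfl, rfl, by omega⟩
  | succ m ih =>
    intro i j h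
    rw [Nat.mul_succ] at h
    obtain ⟨l, h1, h2⟩ := posSplit hA h
    obtain ⟨v, hv0, hvm, hstep⟩ := ih i l h1
    refine ⟨fun t => if t ≤ m then v t else j, by simp [hv0], by simp, ?_⟩
    intro t ht
    rcases Nat.lt_or_ge t m with h' | h'
    · show 0 < (A ^ s) (if t ≤ m then v t else j) (if t + 1 ≤ m then v (t + 1) else j)
      rw [if_pos (by omega : t ≤ m), if_pos (by omega : t + 1 ≤ m)]
      exact hstep t h'
    · have htm : t = m := by omega
      subst htm
      show 0 < (A ^ s) (if t ≤ t then v t else j) (if t + 1 ≤ t then v (t + 1) else j)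
      rw [if_pos le_rfl, if_neg (by omega : ¬ t + 1 ≤ t), hvm]
      exact h2

lemma posOfChain (hA : ∀ i j, 0 ≤ A i j) (s : ℕ) :
    ∀ (m : ℕ) (v : ℕ → Fin n),
    (∀ t < m, 0 < (A ^ s) (v t) (v (t + 1))) → 0 < (A ^ (s * m)) (v 0) (v m) := by
  intro m
  induction m with
  | zero =>
    intro v _
    rw [Nat.mul_zero, pow_zero, Matrix.one_apply_eq]
    norm_num
  | succ m ih =>
    intro v hstep
    rw [Nat.mul_succ]
    exact posMul hA (ih v fun t ht => hstep t (by omega)) (hstep m (by omega))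

lemma posSeg (hA : ∀ i j, 0 ≤ A i j) (s a m : ℕ) (v : ℕ → Fin n)
    (hstep : ∀ t, a ≤ t → t < a + m → 0 < (A ^ s) (v t) (v (t + 1))) :
    0 < (A ^ (s * m)) (v a) (v (a + m)) :=
  posOfChain hA s m (fun t => v (a + t)) (fun t ht => hstep (a + t) (Nat.le_add_right a t) (by omega))

lemma pigeon (v : ℕ → Fin n) : ∃ a b : ℕ, a < b ∧ b ≤ n ∧ v a = v b := by
  obtain ⟨a, b, hab, heq⟩ := Fintype.exists_ne_map_eq_of_card_lt
    (fun t : Fin (n + 1) => v t) (by simp)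
  have hne : (a : ℕ) ≠ (b : ℕ) := fun h => hab (Fin.ext h)
  rcases Nat.lt_or_ge (a : ℕ) (b : ℕ) with h | h
  · exact ⟨a, b, h, by omega, heq⟩
  · exact ⟨b, a, by omega, by omega, heq.symm⟩

lemma stepUp (hA : ∀ i j, 0 ≤ A i j) {m : ℕ} (hm : 1 ≤ m)
    (h : ∀ i j, 0 < (A ^ m) i j) : ∀ i j, 0 < (A ^ (m + 1)) i j := by
  intro i j
  have h1 : 0 < (A ^ (1 + (m - 1))) i i := by
    rw [show 1 + (m - 1) = m by omega]
    exact h i i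
  obtain ⟨l, hl, -⟩ := posSplit hA h1
  have := posMul hA hl (h l j)
  rwa [show 1 + m = m + 1 by omega] at this

end Stmt0Aux

open Stmt0Aux

theorem stmt0 (n : ℕ) (hn : 2 ≤ n) (A : Matrix (Fin n) (Fin n) ℝ)
    (hA : ∀ i j, 0 ≤ A i j) :
    (∃ k : ℕ, 0 < k ∧ ∀ i j, 0 < (A ^ k) i j) ↔
      (∀ i j, 0 < (A ^ (n ^ 2 - 2 * n + 2)) i j) := by
  classical
  constructor
  · rintro ⟨k, hk, hkpos⟩
    -- positivity propagates upward
    have hup : ∀ m, k ≤ m → ∀ i j, 0 < (A ^ m) i j := by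
      intro m hm
      induction m, hm using Nat.le_induction with
      | base => exact hkpos
      | succ m hm ih => exact stepUp hA (by omega) ih
    have i0 : Fin n := ⟨0, by omega⟩
    -- shortest cycle length s
    have hQex : ∃ c, 0 < c ∧ ∃ x : Fin n, 0 < (A ^ c) x x := ⟨k, hk, i0, hkpos i0 i0⟩
    set s := Nat.find hQex with hsdef
    obtain ⟨hs1, w, hw⟩ := Nat.find_spec hQex
    have hsmin : ∀ c, 0 < c → c < s → ∀ x : Fin n, ¬ 0 < (A ^ c) x x := by
      intro c hc0 hcs x hx
      exact Nat.find_min hQex hcs ⟨hc0, x, hx⟩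
    -- cutting a long closed walk
    have cutClosed : ∀ (m : ℕ) (x : Fin n), n < m → 0 < (A ^ m) x x →
        ∃ c, 0 < c ∧ c ≤ n ∧ (∃ y, 0 < (A ^ c) y y) ∧ 0 < (A ^ (m - c)) x x := by
      intro m x hm hx
      obtain ⟨v, hv0, hvm, hstep⟩ := chainOf hA 1 m x x (by rwa [one_mul])
      obtain ⟨a, b, hab, hbn, heq⟩ := pigeon v
      refine ⟨b - a, by omega, by omega, ⟨v a, ?_⟩, ?_⟩
      · have h1 := posSeg hA 1 a (b - a) v (fun t h1 h2 => hstep t (by omega))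
        rw [one_mul, show a + (b - a) = b by omega, ← heq] at h1
        exact h1
      · have h1 := posSeg hA 1 0 a v (fun t h1 h2 => hstep t (by omega))
        have h2 := posSeg hA 1 b (m - b) v (fun t h1 h2 => hstep t (by omega))
        rw [one_mul, show b + (m - b) = m by omega, hvm] at h2
        rw [one_mul, hv0, Nat.zero_add] at h1
        rw [← heq] at h2
        have h3 := posMul hA h1 h2
        rwa [show a + (m - b) = m - (b - a) by omega] at h3
    -- s ≤ n
    have hsn : s ≤ n := by
      rcases le_or_gt k n with h | h
      · exact le_trans (Nat.find_le ⟨hk, i0, hkpos i0 i0⟩) h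
      · obtain ⟨c, hc0, hcn, ⟨y, hy⟩, -⟩ := cutClosed k i0 h (hkpos i0 i0)
        exact le_trans (Nat.find_le ⟨hc0, y, hy⟩) hcn
    -- if s = n, all closed walk lengths are divisible by n
    have hdvd : s = n → ∀ m, 0 < m → ∀ x : Fin n, 0 < (A ^ m) x x → n ∣ m := by
      intro hsn' m
      induction m using Nat.strong_induction_on with
      | _ m ih =>
        intro hm0 x hx
        rcases lt_trichotomy m n with h | h | h
        · exact absurd hx (hsmin m hm0 (by omega) x)
        · exact h ▸ dvd_refl n
        · obtain ⟨c, hc0, hcn, ⟨y, hy⟩, hout⟩ := cutClosed m x h hx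
          have hcn' : c = n := by
            have : s ≤ c := Nat.find_le ⟨hc0, y, hy⟩
            omega
          obtain ⟨q, hq⟩ := ih (m - c) (by omega) (by omega) x hout
          refine ⟨q + 1, ?_⟩
          rw [Nat.mul_add, Nat.mul_one, ← hq]
          omega
    -- so s ≤ n - 1
    have hsn1 : s + 1 ≤ n := by
      by_contra hcon
      have hsn' : s = n := by omega
      have d1 := hdvd hsn' k hk i0 (hkpos i0 i0)
      have d2 := hdvd hsn' (k + 1) (by omega) i0 (hup (k + 1) (by omega) i0 i0)
      have d3 := Nat.dvd_sub d2 d1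
      rw [show k + 1 - k = 1 by omega] at d3
      have := Nat.le_of_dvd one_pos d3
      omega
    -- the shortest cycle: u 0 = w, u s = w, unit steps
    obtain ⟨u, hu0, hus, hustep⟩ := chainOf hA 1 s w w (by rwa [one_mul])
    -- periodic steps along the cycle
    have hUstep : ∀ t, 0 < (A ^ 1) (u (t % s)) (u ((t + 1) % s)) := by
      intro t
      have hr : t % s < s := Nat.mod_lt t (by omega)
      rcases Nat.lt_or_ge (t % s + 1) s with h | h
      · have e : (t + 1) % s = t % s + 1 := by
          conv_lhs => rw [← Nat.div_add_mod t s]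
          rw [Nat.add_assoc, Nat.add_comm (s * (t / s)), Nat.add_mul_mod_self_left]
          exact Nat.mod_eq_of_lt h
        rw [e]
        exact hustep _ hr
      · have hrs : t % s + 1 = s := by omega
        have e : (t + 1) % s = 0 := by
          conv_lhs => rw [← Nat.div_add_mod t s]
          rw [Nat.add_assoc, hrs, ← Nat.mul_succ, Nat.mul_mod_right]
        have h1 := hustep (t % s) hr
        rw [hrs, hus, ← hu0] at h1
        rw [e]
        exact h1
    -- walks along the cycle
    have hUchain : ∀ p m : ℕ, 0 < (A ^ m) (u (p % s)) (u ((p + m) % s)) := by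
      intro p m
      have := posSeg hA 1 p m (fun t => u (t % s)) (fun t _ _ => hUstep t)
      rwa [one_mul] at this
    -- loop of length s at every cycle vertex
    have hloops : ∀ q : ℕ, 0 < (A ^ s) (u (q % s)) (u (q % s)) := by
      intro q
      have := hUchain q s
      rwa [Nat.add_mod_right] at this
    -- main positivity at exponent M = (n - s) + s * (n - 1)
    have hM : ∀ i j, 0 < (A ^ ((n - s) + s * (n - 1))) i j := by
      intro i j
      -- distance from i to the cycle
      have hDex : ∃ m : ℕ, ∃ p, p < s ∧ 0 < (A ^ m) i (u p) :=
        ⟨k, 0, by omega, by rw [hu0]; exact hkpos i w⟩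
      set D := Nat.find hDex with hDdef
      obtain ⟨p0, hp0, hDpos⟩ := Nat.find_spec hDex
      have hDmin : ∀ m', m' < D → ∀ p, p < s → ¬ 0 < (A ^ m') i (u p) := by
        intro m' hm' p hp hpos
        exact Nat.find_min hDex hm' ⟨p, hp, hpos⟩
      -- D + s ≤ n via an injection Fin D ⊕ Fin s → Fin n
      have hDn : D + s ≤ n := by
        obtain ⟨v, hv0, hvD, hvstep⟩ := chainOf hA 1 D i (u p0) (by rwa [one_mul])
        -- vertices strictly before D are not on the cycle
        have hnotW : ∀ t, t < D → ∀ p, p < s → v t ≠ u p := by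
          intro t ht p hp hvt
          have h1 := posSeg hA 1 0 t v (fun r h1 h2 => hvstep r (by omega))
          rw [one_mul, hv0, Nat.zero_add, hvt] at h1
          exact hDmin t ht p hp h1
        have hvinj : ∀ a b, a < b → b < D → v a ≠ v b := by
          intro a b hab hbD hvab
          have h1 := posSeg hA 1 0 a v (fun r h1 h2 => hvstep r (by omega))
          have h2 := posSeg hA 1 b (D - b) v (fun r h1 h2 => hvstep r (by omega))
          rw [one_mul, show b + (D - b) = D by omega, hvD] at h2
          rw [one_mul, hv0, Nat.zero_add] at h1
          rw [← hvab] at h2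
          have h3 := posMul hA h1 h2
          exact hDmin (a + (D - b)) (by omega) p0 hp0 h3
        have huinj : ∀ a b, a < b → b < s → u a ≠ u b := by
          intro a b hab hbs huab
          have h1 := posSeg hA 1 a (b - a) u (fun r h1 h2 => hustep r (by omega))
          rw [one_mul, show a + (b - a) = b by omega, ← huab] at h1
          exact hsmin (b - a) (by omega) (by omega) (u a) h1
        have hinj : Function.Injective
            (Sum.elim (fun t : Fin D => v t) (fun q : Fin s => u q)) := by
          rintro (a | a) (b | b) hab
          · simp only [Sum.elim_inl] at hab
            rcases lt_trichotomy (a : ℕ) (b : ℕ) with h | h | h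
            · exact absurd hab (hvinj a b h b.isLt)
            · exact congrArg Sum.inl (Fin.ext h)
            · exact absurd hab.symm (hvinj b a h a.isLt)
          · simp only [Sum.elim_inl, Sum.elim_inr] at hab
            exact absurd hab (hnotW a a.isLt b b.isLt)
          · simp only [Sum.elim_inl, Sum.elim_inr] at hab
            exact absurd hab.symm (hnotW b b.isLt a a.isLt)
          · simp only [Sum.elim_inr] at hab
            rcases lt_trichotomy (a : ℕ) (b : ℕ) with h | h | h
            · exact absurd hab (huinj a b h b.isLt)
            · exact congrArg Sum.inr (Fin.ext h)
            · exact absurd hab.symm (huinj b a h a.isLt)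
        have := Fintype.card_le_of_injective _ hinj
        simpa using this
      -- reach a cycle vertex in exactly n - s steps
      have e0 : p0 % s = p0 := Nat.mod_eq_of_lt hp0
      set r2 := (p0 + (n - s - D)) % s with hr2
      have hreach : 0 < (A ^ (n - s)) i (u r2) := by
        have h1 := hUchain p0 (n - s - D)
        rw [e0] at h1
        have h2 := posMul hA hDpos h1
        rwa [show D + (n - s - D) = n - s by omega] at h2
      have hr2s : r2 % s = r2 := Nat.mod_eq_of_lt (Nat.mod_lt _ (by omega))
      have hloop2 : 0 < (A ^ s) (u r2) (u r2) := by
        have := hloops r2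
        rwa [hr2s] at this
      -- from the cycle vertex to j in exactly s * (n - 1) steps
      have hBex : ∃ t : ℕ, 0 < (A ^ (s * t)) (u r2) j :=
        ⟨k, hup (s * k) (Nat.le_mul_of_pos_left k hs1) (u r2) j⟩
      set E := Nat.find hBex with hEdef
      have hE : 0 < (A ^ (s * E)) (u r2) j := Nat.find_spec hBex
      have hEn : E ≤ n - 1 := by
        by_contra hcon
        push_neg at hcon
        have hnE : n ≤ E := by omega
        obtain ⟨v, hv0, hvE, hvstep⟩ := chainOf hA s E (u r2) j hE
        obtain ⟨a, b, hab, hbn, heq⟩ := pigeon v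
        have h1 := posSeg hA s 0 a v (fun t h1 h2 => hvstep t (by omega))
        have h2 := posSeg hA s b (E - b) v (fun t h1 h2 => hvstep t (by omega))
        rw [show b + (E - b) = E by omega, hvE] at h2
        rw [hv0, Nat.zero_add] at h1
        rw [← heq] at h2
        have h3 := posMul hA h1 h2
        rw [← Nat.mul_add, show a + (E - b) = E - (b - a) by omega] at h3
        exact Nat.find_min hBex (show E - (b - a) < E by omega) h3
      have hBfull : 0 < (A ^ (s * (n - 1))) (u r2) j := by
        have hloopm := posOfChain hA s (n - 1 - E) (fun _ => u r2) (fun t ht => hloop2)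
        have h4 := posMul hA hloopm hE
        rwa [← Nat.mul_add, show (n - 1 - E) + E = n - 1 by omega] at h4
      exact posMul hA hreach hBfull
    -- M ≤ N = n² - 2n + 2
    have hMN : (n - s) + s * (n - 1) ≤ n ^ 2 - 2 * n + 2 := by
      obtain ⟨m, rfl⟩ : ∃ m, n = m + 2 := ⟨n - 2, by omega⟩
      have h1 : (s : ℤ) ≤ (m : ℤ) + 1 := by exact_mod_cast (by omega : s ≤ m + 1)
      have h2 : 2 * (m + 2) ≤ (m + 2) ^ 2 := by nlinarith
      have h3 : s ≤ m + 2 := by omega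
      rw [show m + 2 - 1 = m + 1 from rfl]
      zify [h2, h3]
      nlinarith [mul_le_mul_of_nonneg_right h1 (show (0:ℤ) ≤ (m : ℤ) by positivity)]
    -- pad up from M to N
    have hM1 : 1 ≤ (n - s) + s * (n - 1) := by omega
    have hfinal : ∀ m, ((n - s) + s * (n - 1)) ≤ m → ∀ i j, 0 < (A ^ m) i j := by
      intro m hm
      induction m, hm using Nat.le_induction with
      | base => exact hM
      | succ m hm ih => exact stepUp hA (by omega) ih
    exact hfinal _ hMN
  · intro h
    refine ⟨n ^ 2 - 2 * n + 2, ?_, h⟩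
    have : n ^ 2 - 2 * n + 2 = (n ^ 2 - 2 * n) + 2 := rfl
    omega
end

section
/- If a finite set M of nonnegative n×n matrices is primitive, then it has a positive product of length at most 2^(n²). That is, there exist indices i₁,…,i_k with k ≤ 2^(n²) such that A_{i₁}⋯A_{i_k} is entrywise positive. -/
open Finset

private lemma sum_pos_iff' {α : Type*} {s : Finset α} {f : α → ℝ}
    (h : ∀ a ∈ s, 0 ≤ f a) : 0 < ∑ a ∈ s, f a ↔ ∃ a ∈ s, 0 < f a := by
  constructor
  · intro hs
    by_contra hc
    push_neg at hc
    have : ∑ a ∈ s, f a = 0 := Finset.sum_eq_zero fun a ha => le_antisymm (hc a ha) (h a ha)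
    simp [this] at hs
  · rintro ⟨a, ha, hfa⟩
    exact Finset.sum_pos' h ⟨a, ha, hfa⟩

private lemma mul_entry_pos_iff {n : ℕ} {A B : Matrix (Fin n) (Fin n) ℝ}
    (hA : ∀ i j, 0 ≤ A i j) (hB : ∀ i j, 0 ≤ B i j) (i j : Fin n) :
    0 < (A * B) i j ↔ ∃ k, 0 < A i k ∧ 0 < B k j := by
  rw [Matrix.mul_apply, sum_pos_iff' (fun k _ => mul_nonneg (hA i k) (hB k j))]
  simp only [Finset.mem_univ, true_and]
  constructor
  · rintro ⟨k, hk⟩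
    rcases mul_pos_iff.mp hk with ⟨h1, h2⟩ | ⟨h1, _⟩
    · exact ⟨k, h1, h2⟩
    · exact absurd h1 (not_lt.mpr (hA i k))
  · rintro ⟨k, h1, h2⟩
    exact ⟨k, mul_pos h1 h2⟩

private lemma prod_nonneg' {n : ℕ} : ∀ (l : List (Matrix (Fin n) (Fin n) ℝ)),
    (∀ P ∈ l, ∀ i j, 0 ≤ P i j) → ∀ i j, 0 ≤ l.prod i j := by
  intro l
  induction l with
  | nil => intro _ i j; simp [Matrix.one_apply]; positivity
  | cons A t ih =>
    intro h i j
    rw [List.prod_cons, Matrix.mul_apply]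
    exact Finset.sum_nonneg fun k _ => mul_nonneg (h A (by simp) i k)
      (ih (fun P hP => h P (by simp [hP])) k j)

/-- positivity pattern of a matrix -/
private noncomputable def patt {n : ℕ} (A : Matrix (Fin n) (Fin n) ℝ) : Finset (Fin n × Fin n) :=
  Finset.univ.filter fun p => 0 < A p.1 p.2

private lemma patt_eq_iff {n : ℕ} {A B : Matrix (Fin n) (Fin n) ℝ} :
    patt A = patt B ↔ ∀ i j, (0 < A i j ↔ 0 < B i j) := by
  simp only [patt, Finset.ext_iff, Finset.mem_filter, Finset.mem_univ, true_and, Prod.forall]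

private lemma patt_mul_left {n : ℕ} {A A' B : Matrix (Fin n) (Fin n) ℝ}
    (hA : ∀ i j, 0 ≤ A i j) (hA' : ∀ i j, 0 ≤ A' i j) (hB : ∀ i j, 0 ≤ B i j)
    (h : patt A = patt A') : patt (A * B) = patt (A' * B) := by
  rw [patt_eq_iff] at h ⊢
  intro i j
  rw [mul_entry_pos_iff hA hB, mul_entry_pos_iff hA' hB]
  exact exists_congr fun k => and_congr_left' (h i k)

private lemma key {n : ℕ} (M : Finset (Matrix (Fin n) (Fin n) ℝ))
    (hpos : ∀ A ∈ M, ∀ i j, 0 ≤ A i j) :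
    ∀ L : ℕ, ∀ l : List (Matrix (Fin n) (Fin n) ℝ), l.length = L →
    (∀ P ∈ l, P ∈ M) → l ≠ [] → (∀ i j, 0 < l.prod i j) →
    ∃ l' : List (Matrix (Fin n) (Fin n) ℝ),
      (∀ P ∈ l', P ∈ M) ∧ l' ≠ [] ∧ l'.length ≤ 2 ^ (n ^ 2) ∧ ∀ i j, 0 < l'.prod i j := by
  intro L
  induction L using Nat.strong_induction_on with
  | _ L ih =>
    intro l hlen hmem hne hprod
    by_cases hle : l.length ≤ 2 ^ (n ^ 2)
    · exact ⟨l, hmem, hne, hle, hprod⟩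
    push_neg at hle
    -- pigeonhole on patterns of prefixes
    have hmaps : ∀ m ∈ Finset.Icc 1 l.length,
        patt (l.take m).prod ∈ (Finset.univ : Finset (Finset (Fin n × Fin n))) :=
      fun _ _ => Finset.mem_univ _
    have hcard : (Finset.univ : Finset (Finset (Fin n × Fin n))).card < (Finset.Icc 1 l.length).card := by
      rw [Finset.card_univ, Fintype.card_finset, Fintype.card_prod, Fintype.card_fin,
        Nat.card_Icc]
      calc 2 ^ (n * n) = 2 ^ (n ^ 2) := by rw [sq]
        _ < l.length := hle
        _ = l.length + 1 - 1 := by omega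
    obtain ⟨a, ha, b, hb, hab, heq⟩ :=
      Finset.exists_ne_map_eq_of_card_lt_of_maps_to hcard hmaps
    rw [Finset.mem_Icc] at ha hb
    -- wlog a < b
    wlog hlt : a < b generalizing a b
    · exact this b hb a ha hab.symm heq.symm (by omega)
    -- nonnegativity facts
    have hnn : ∀ t : List (Matrix (Fin n) (Fin n) ℝ), (∀ P ∈ t, P ∈ M) →
        ∀ i j, 0 ≤ t.prod i j := fun t ht =>
      prod_nonneg' t (fun P hP => hpos P (ht P hP))
    have hmem_take : ∀ m, ∀ P ∈ l.take m, P ∈ M := fun m P hP => hmem P (List.mem_of_mem_take hP)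
    have hmem_drop : ∀ m, ∀ P ∈ l.drop m, P ∈ M := fun m P hP => hmem P (List.mem_of_mem_drop hP)
    set l' := l.take a ++ l.drop b with hl'
    have hmem' : ∀ P ∈ l', P ∈ M := by
      intro P hP
      rcases List.mem_append.mp hP with h | h
      exacts [hmem_take a P h, hmem_drop b P h]
    obtain ⟨ha1, ha2⟩ := ha
    obtain ⟨hb1, hb2⟩ := hb
    have hlen' : l'.length < L := by
      simp only [hl', List.length_append, List.length_take, List.length_drop]
      omega
    have hne' : l' ≠ [] := by
      have hlp : l'.length ≠ 0 := by
        simp only [hl', List.length_append, List.length_take, List.length_drop]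
        omega
      exact fun hc => hlp (by simp [hc])
    -- same pattern for the new product
    have hp : patt l'.prod = patt l.prod := by
      have hsplit : l.prod = (l.take b).prod * (l.drop b).prod := by
        rw [← List.prod_append, List.take_append_drop]
      have hsplit' : l'.prod = (l.take a).prod * (l.drop b).prod := by
        rw [hl', List.prod_append]
      rw [hsplit, hsplit']
      exact patt_mul_left (hnn _ (hmem_take a)) (hnn _ (hmem_take b)) (hnn _ (hmem_drop b)) heq
    have hprod' : ∀ i j, 0 < l'.prod i j := by
      intro i j
      exact (patt_eq_iff.mp hp i j).mpr (hprod i j)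
    exact ih l'.length (hlen ▸ hlen') l' rfl hmem' hne' hprod'

theorem stmt3 (n : ℕ) (M : Finset (Matrix (Fin n) (Fin n) ℝ))
    (hpos : ∀ A ∈ M, ∀ i j, 0 ≤ A i j)
    (hprim : ∃ l : List (Matrix (Fin n) (Fin n) ℝ),
      (∀ P ∈ l, P ∈ M) ∧ l ≠ [] ∧ ∀ i j, 0 < l.prod i j) :
    ∃ l : List (Matrix (Fin n) (Fin n) ℝ),
      (∀ P ∈ l, P ∈ M) ∧ l ≠ [] ∧ l.length ≤ 2 ^ (n ^ 2) ∧ ∀ i j, 0 < l.prod i j := by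
  obtain ⟨l, h1, h2, h3⟩ := hprim
  exact key M hpos l.length l rfl h1 h2 h3
end

section
/- Suppose every synchronizing automaton on n states admits a synchronizing word of length at most f(n). Then every primitive set M of nonnegative n×n matrices with no zero rows or columns admits a positive product of length at most 2f(n) + n − 1. -/
open Matrix

namespace Stmt12Aux

variable {n : ℕ}

lemma listProdNonneg (l : List (Matrix (Fin n) (Fin n) ℝ))
    (h : ∀ A ∈ l, ∀ i j, 0 ≤ A i j) : ∀ i j, 0 ≤ l.prod i j := by
  induction l with
  | nil =>
    intro i j
    simp only [List.prod_nil, Matrix.one_apply]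
    split <;> norm_num
  | cons A t ih =>
    intro i j
    rw [List.prod_cons, Matrix.mul_apply]
    exact Finset.sum_nonneg fun k _ =>
      mul_nonneg (h A (List.mem_cons_self) i k)
        (ih (fun B hB => h B (List.mem_cons_of_mem A hB)) k j)

lemma mulPos {X Y : Matrix (Fin n) (Fin n) ℝ} (hX : ∀ i j, 0 ≤ X i j)
    (hY : ∀ i j, 0 ≤ Y i j) {a c b : Fin n} (h1 : 0 < X a c) (h2 : 0 < Y c b) :
    0 < (X * Y) a b := by
  rw [Matrix.mul_apply]
  exact Finset.sum_pos' (fun k _ => mul_nonneg (hX a k) (hY k b))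
    ⟨c, Finset.mem_univ c, mul_pos h1 h2⟩

lemma mulPosRev {X Y : Matrix (Fin n) (Fin n) ℝ} (hX : ∀ i j, 0 ≤ X i j)
    (hY : ∀ i j, 0 ≤ Y i j) {a b : Fin n} (h : 0 < (X * Y) a b) :
    ∃ c, 0 < X a c ∧ 0 < Y c b := by
  rw [Matrix.mul_apply] at h
  by_contra hc
  push_neg at hc
  refine absurd h (not_lt.2 (Finset.sum_nonpos fun k _ => ?_))
  rcases (hX a k).lt_or_eq with h1 | h1
  · exact mul_nonpos_of_nonneg_of_nonpos (le_of_lt h1) (hc k h1)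
  · rw [← h1, zero_mul]

def selMat {n : ℕ} (σ : Fin n → Fin n) : Matrix (Fin n) (Fin n) ℝ :=
  Matrix.of fun i j => if j = σ i then 1 else 0

lemma selMat_one : (1 : Matrix (Fin n) (Fin n) ℝ) = selMat (fun a => a) := by
  ext i j
  simp [selMat, Matrix.one_apply, eq_comm]

lemma selMat_mul (g h : Fin n → Fin n) :
    selMat g * selMat h = selMat (fun a => h (g a)) := by
  ext i j
  simp only [selMat, Matrix.of_apply, Matrix.mul_apply, ite_mul, one_mul, zero_mul]
  rw [Finset.sum_ite_eq' Finset.univ (g i) (fun x => if j = h x then (1:ℝ) else 0)]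
  simp

lemma selMat_prod (fs : List (Fin n → Fin n)) :
    (fs.map selMat).prod = selMat (fun a => fs.foldl (fun x g => g x) a) := by
  induction fs with
  | nil => simpa using selMat_one
  | cons g t ih =>
    rw [List.map_cons, List.prod_cons, ih, selMat_mul]
    simp

lemma prodColPos (M : Finset (Matrix (Fin n) (Fin n) ℝ))
    (hpos : ∀ A ∈ M, ∀ i j, 0 ≤ A i j) :
    ∀ lp : List (Matrix (Fin n) (Fin n) ℝ × (Fin n → Fin n)),
      (∀ p ∈ lp, p.1 ∈ M ∧ ∀ x, 0 < p.1 x (p.2 x)) →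
      ∀ a, 0 < (lp.map Prod.fst).prod a (lp.foldl (fun x p => p.2 x) a) := by
  intro lp
  induction lp with
  | nil => intro _ a; simp [Matrix.one_apply]
  | cons p t ih =>
    intro hc a
    have hp := hc p List.mem_cons_self
    have ht : ∀ q ∈ t, q.1 ∈ M ∧ ∀ x, 0 < q.1 x (q.2 x) :=
      fun q hq => hc q (List.mem_cons_of_mem p hq)
    rw [List.map_cons, List.prod_cons, List.foldl_cons]
    exact mulPos (hpos p.1 hp.1)
      (listProdNonneg _ (by
        intro B hB
        rcases List.mem_map.1 hB with ⟨q, hq, rfl⟩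
        exact hpos q.1 (ht q hq).1))
      (hp.2 a) (ih ht (p.2 a))

lemma syncD (M : Finset (Matrix (Fin n) (Fin n) ℝ))
    (hpos : ∀ A ∈ M, ∀ i j, 0 ≤ A i j) (hrow : ∀ A ∈ M, ∀ i, ∃ j, 0 < A i j) :
    ∀ l : List (Matrix (Fin n) (Fin n) ℝ), (∀ A ∈ l, A ∈ M) → ∀ i : Fin n,
      ∃ lp : List (Matrix (Fin n) (Fin n) ℝ × (Fin n → Fin n)),
        (∀ p ∈ lp, p.1 ∈ M ∧ ∀ x, 0 < p.1 x (p.2 x)) ∧ lp.length = l.length ∧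
        ∀ a, 0 < l.prod a i → lp.foldl (fun x p => p.2 x) a = i := by
  classical
  intro l
  induction l with
  | nil =>
    intro _ i
    refine ⟨[], by simp, rfl, ?_⟩
    intro a ha
    by_contra hne
    rw [List.foldl_nil] at hne
    rw [List.prod_nil, Matrix.one_apply_ne hne] at ha
    exact lt_irrefl 0 ha
  | cons A t ih =>
    intro hmem i
    have hA : A ∈ M := hmem A List.mem_cons_self
    have ht : ∀ B ∈ t, B ∈ M := fun B hB => hmem B (List.mem_cons_of_mem A hB)
    obtain ⟨lp', hc', hlen', hfold'⟩ := ih ht i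
    set σ : Fin n → Fin n := fun a =>
      if h : ∃ x, 0 < A a x ∧ 0 < t.prod x i then h.choose
      else (hrow A hA a).choose with hσ
    have hσpos : ∀ a, 0 < A a (σ a) := by
      intro a
      rw [hσ]
      by_cases h : ∃ x, 0 < A a x ∧ 0 < t.prod x i
      · simp only [dif_pos h]; exact h.choose_spec.1
      · simp only [dif_neg h]; exact (hrow A hA a).choose_spec
    refine ⟨(A, σ) :: lp', ?_, by simp [hlen'], ?_⟩
    · intro p hp
      rcases List.mem_cons.1 hp with rfl | hp
      · exact ⟨hA, hσpos⟩
      · exact hc' p hp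
    · intro a ha
      rw [List.prod_cons] at ha
      obtain ⟨x, hx1, hx2⟩ := mulPosRev (hpos A hA)
        (listProdNonneg t (fun B hB => hpos B (ht B hB))) ha
      have hex : ∃ x, 0 < A a x ∧ 0 < t.prod x i := ⟨x, hx1, hx2⟩
      have hσa : 0 < t.prod (σ a) i := by
        rw [hσ]; simp only [dif_pos hex]; exact hex.choose_spec.2
      rw [List.foldl_cons]
      exact hfold' (σ a) hσa

lemma reachShort (hn : 0 < n) (M : Finset (Matrix (Fin n) (Fin n) ℝ))
    (hpos : ∀ A ∈ M, ∀ i j, 0 ≤ A i j) (j i : Fin n)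
    (hex : ∃ l : List (Matrix (Fin n) (Fin n) ℝ), (∀ A ∈ l, A ∈ M) ∧ 0 < l.prod j i) :
    ∃ l : List (Matrix (Fin n) (Fin n) ℝ),
      (∀ A ∈ l, A ∈ M) ∧ l.length ≤ n - 1 ∧ 0 < l.prod j i := by
  classical
  set Q : ℕ → Fin n → Prop := fun k y =>
    ∃ l : List (Matrix (Fin n) (Fin n) ℝ),
      (∀ A ∈ l, A ∈ M) ∧ l.length ≤ k ∧ 0 < l.prod j y with hQ
  set S : ℕ → Finset (Fin n) := fun k => Finset.univ.filter (Q k) with hS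
  set F : Finset (Fin n) → Finset (Fin n) := fun s =>
    s ∪ Finset.univ.filter (fun y => ∃ x ∈ s, ∃ A ∈ M, 0 < A x y) with hF
  have hj0 : ∀ k, j ∈ S k := by
    intro k
    refine Finset.mem_filter.2 ⟨Finset.mem_univ j, [], by simp, by simp, ?_⟩
    simp [Matrix.one_apply]
  have hmono : ∀ k, S k ⊆ S (k + 1) := by
    intro k y hy
    obtain ⟨_, l, h1, h2, h3⟩ := Finset.mem_filter.1 hy
    exact Finset.mem_filter.2 ⟨Finset.mem_univ y, l, h1, h2.trans (Nat.le_succ k), h3⟩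
  have hmono' : ∀ k m, k ≤ m → S k ⊆ S m := by
    intro k m hkm
    induction m with
    | zero => simp_all
    | succ m ihm =>
      rcases Nat.lt_or_ge k (m+1) with h | h
      · exact (ihm (Nat.lt_succ_iff.1 h)).trans (hmono m)
      · have : k = m + 1 := le_antisymm hkm h
        subst this; exact subset_rfl
  have hstep : ∀ k, S (k + 1) = F (S k) := by
    intro k
    apply Finset.Subset.antisymm
    · intro y hy
      obtain ⟨_, l, h1, h2, h3⟩ := Finset.mem_filter.1 hy
      rcases List.eq_nil_or_concat l with rfl | ⟨l₀, A, rfl⟩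
      · refine Finset.mem_union_left _ ?_
        have : y = j := by
          by_contra hne
          rw [List.prod_nil, Matrix.one_apply_ne (Ne.symm hne)] at h3
          exact lt_irrefl 0 h3
        subst this; exact hj0 k
      · have hA : A ∈ M := h1 A (by simp)
        have h1' : ∀ B ∈ l₀, B ∈ M := fun B hB => h1 B (by simp [hB])
        rw [List.concat_eq_append, List.prod_append, List.prod_cons,
          List.prod_nil, mul_one] at h3
        obtain ⟨x, hx1, hx2⟩ := mulPosRev
          (listProdNonneg l₀ (fun B hB => hpos B (h1' B hB))) (hpos A hA) h3
        refine Finset.mem_union_right _ (Finset.mem_filter.2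
          ⟨Finset.mem_univ y, x, ?_, A, hA, hx2⟩)
        refine Finset.mem_filter.2 ⟨Finset.mem_univ x, l₀, h1', ?_, hx1⟩
        have := h2
        simp only [List.concat_eq_append, List.length_append, List.length_cons,
          List.length_nil] at this
        omega
    · intro y hy
      rcases Finset.mem_union.1 hy with hy | hy
      · exact hmono k hy
      · obtain ⟨_, x, hx, A, hA, hAxy⟩ := Finset.mem_filter.1 hy
        obtain ⟨_, l, h1, h2, h3⟩ := Finset.mem_filter.1 hx
        refine Finset.mem_filter.2 ⟨Finset.mem_univ y, l ++ [A], ?_, ?_, ?_⟩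
        · intro B hB
          rcases List.mem_append.1 hB with hB | hB
          · exact h1 B hB
          · simp at hB; subst hB; exact hA
        · simp; omega
        · rw [List.prod_append, List.prod_cons, List.prod_nil, mul_one]
          exact mulPos (listProdNonneg l (fun B hB => hpos B (h1 B hB)))
            (hpos A hA) h3 hAxy
  have hstab : ∀ k, S k = S (k + 1) → ∀ m, S (k + m) = S k := by
    intro k hk m
    induction m with
    | zero => rfl
    | succ m ihm =>
      have : S (k + m + 1) = F (S (k + m)) := hstep (k + m)
      rw [show k + (m+1) = k + m + 1 from rfl, this, ihm, ← hstep k, ← hk]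
  have hfix : ∃ k ≤ n - 1, S k = S (k + 1) := by
    by_contra hcon
    push_neg at hcon
    have hcard : ∀ k, k ≤ n → k + 1 ≤ (S k).card := by
      intro k hk
      induction k with
      | zero => exact Finset.card_pos.2 ⟨j, hj0 0⟩
      | succ k ihk =>
        have hklt : k ≤ n - 1 := by omega
        have hssub : S k ⊂ S (k + 1) :=
          Finset.ssubset_iff_subset_ne.2 ⟨hmono k, hcon k hklt⟩
        have := Finset.card_lt_card hssub
        have := ihk (by omega)
        omega
    have := hcard n le_rfl
    have hle : (S n).card ≤ n := by
      simpa using Finset.card_le_univ (S n)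
    omega
  obtain ⟨k, hk, hkfix⟩ := hfix
  have hfinal : i ∈ S (n - 1) := by
    obtain ⟨l, h1, h3⟩ := hex
    have hiL : i ∈ S l.length :=
      Finset.mem_filter.2 ⟨Finset.mem_univ i, l, h1, le_rfl, h3⟩
    rcases Nat.lt_or_ge l.length (n - 1) with h | h
    · exact hmono' _ _ (le_of_lt h) hiL
    · have : S l.length = S k := by
        have := hstab k hkfix (l.length - k)
        rwa [Nat.add_sub_cancel' (hk.trans h)] at this
      rw [this] at hiL
      exact hmono' _ _ hk hiL
  obtain ⟨_, l, h1, h2, h3⟩ := Finset.mem_filter.1 hfinal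
  exact ⟨l, h1, h2, h3⟩

lemma colLemma (hn : 0 < n) (f : ℕ → ℕ)
    (hf : ∀ M' : Finset (Matrix (Fin n) (Fin n) ℝ),
      (∀ A ∈ M', ∀ i j, A i j = 0 ∨ A i j = 1) →
      (∀ A ∈ M', ∀ i, ∃! j, A i j = 1) →
      (∃ l : List (Matrix (Fin n) (Fin n) ℝ), (∀ P ∈ l, P ∈ M') ∧ l ≠ [] ∧
        ∃ i : Fin n, l.prod = Matrix.of fun _ c => if c = i then (1 : ℝ) else 0) →
      ∃ l : List (Matrix (Fin n) (Fin n) ℝ), (∀ P ∈ l, P ∈ M') ∧ l ≠ [] ∧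
        l.length ≤ f n ∧
        ∃ i : Fin n, l.prod = Matrix.of fun _ c => if c = i then (1 : ℝ) else 0)
    (M : Finset (Matrix (Fin n) (Fin n) ℝ))
    (hpos : ∀ A ∈ M, ∀ i j, 0 ≤ A i j)
    (hrow : ∀ A ∈ M, ∀ i, ∃ j, 0 < A i j)
    (hprim : ∃ l : List (Matrix (Fin n) (Fin n) ℝ),
      (∀ P ∈ l, P ∈ M) ∧ l ≠ [] ∧ ∀ i j, 0 < l.prod i j) :
    ∃ l : List (Matrix (Fin n) (Fin n) ℝ),
      (∀ P ∈ l, P ∈ M) ∧ l ≠ [] ∧ l.length ≤ f n ∧ ∃ c, ∀ a, 0 < l.prod a c := by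
  classical
  obtain ⟨lP, hlP, hlPne, hlPpos⟩ := hprim
  set M' : Finset (Matrix (Fin n) (Fin n) ℝ) :=
    ((M ×ˢ (Finset.univ : Finset (Fin n → Fin n))).filter
      (fun p => ∀ x, 0 < p.1 x (p.2 x))).image (fun p => selMat p.2) with hM'
  have hmemI : ∀ (A : Matrix (Fin n) (Fin n) ℝ) (σ : Fin n → Fin n),
      A ∈ M → (∀ x, 0 < A x (σ x)) → selMat σ ∈ M' := by
    intro A σ hA hσ
    exact Finset.mem_image.2 ⟨(A, σ), Finset.mem_filter.2
      ⟨Finset.mem_product.2 ⟨hA, Finset.mem_univ σ⟩, hσ⟩, rfl⟩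
  have hmemE : ∀ S ∈ M', ∃ A σ, A ∈ M ∧ (∀ x, 0 < A x (σ x)) ∧ S = selMat σ := by
    intro S hS
    obtain ⟨p, hp, rfl⟩ := Finset.mem_image.1 hS
    obtain ⟨hp1, hp2⟩ := Finset.mem_filter.1 hp
    exact ⟨p.1, p.2, (Finset.mem_product.1 hp1).1, hp2, rfl⟩
  have h01 : ∀ A ∈ M', ∀ i j, A i j = 0 ∨ A i j = 1 := by
    intro S hS i j
    obtain ⟨A, σ, _, _, rfl⟩ := hmemE S hS
    by_cases h : j = σ i
    · right; simp [selMat, h]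
    · left; simp [selMat, h]
  have hstoch : ∀ A ∈ M', ∀ i, ∃! j, A i j = 1 := by
    intro S hS i
    obtain ⟨A, σ, _, _, rfl⟩ := hmemE S hS
    refine ⟨σ i, by simp [selMat], ?_⟩
    intro y hy
    by_contra hne
    rw [show selMat σ i y = if y = σ i then (1:ℝ) else 0 from rfl, if_neg hne] at hy
    norm_num at hy
  set i₀ : Fin n := ⟨0, hn⟩ with hi₀
  obtain ⟨lp₀, hc₀, hlen₀, hfold₀⟩ := syncD M hpos hrow lP hlP i₀
  have hlp₀ne : lp₀ ≠ [] := by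
    intro h
    rw [h] at hlen₀
    exact hlPne (List.length_eq_zero_iff.1 hlen₀.symm)
  have hsync : ∃ l : List (Matrix (Fin n) (Fin n) ℝ), (∀ P ∈ l, P ∈ M') ∧ l ≠ [] ∧
      ∃ i : Fin n, l.prod = Matrix.of fun _ c => if c = i then (1 : ℝ) else 0 := by
    refine ⟨lp₀.map (fun p => selMat p.2), ?_, ?_, i₀, ?_⟩
    · intro P hP
      obtain ⟨p, hp, rfl⟩ := List.mem_map.1 hP
      exact hmemI p.1 p.2 (hc₀ p hp).1 (hc₀ p hp).2
    · intro h
      exact hlp₀ne (List.map_eq_nil_iff.1 h)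
    · have h1 : lp₀.map (fun p => selMat p.2) = (lp₀.map Prod.snd).map selMat := by
        rw [List.map_map]; rfl
      rw [h1, selMat_prod]
      have h2 : ∀ a, (lp₀.map Prod.snd).foldl (fun x g => g x) a
          = lp₀.foldl (fun x p => p.2 x) a := by
        intro a; rw [List.foldl_map]
      have h3 : ∀ a, lp₀.foldl (fun x p => p.2 x) a = i₀ :=
        fun a => hfold₀ a (hlPpos a i₀)
      have : (fun a => (lp₀.map Prod.snd).foldl (fun x g => g x) a)
          = fun _ => i₀ := by
        funext a; rw [h2, h3]
      rw [this]
      rfl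
  obtain ⟨l'', h''mem, h''ne, h''len, i₁, h''prod⟩ := hf M' h01 hstoch hsync
  have extract : ∀ L : List (Matrix (Fin n) (Fin n) ℝ), (∀ P ∈ L, P ∈ M') →
      ∃ lp : List (Matrix (Fin n) (Fin n) ℝ × (Fin n → Fin n)),
        (∀ p ∈ lp, p.1 ∈ M ∧ ∀ x, 0 < p.1 x (p.2 x)) ∧
        L = lp.map (fun p => selMat p.2) := by
    intro L
    induction L with
    | nil => exact fun _ => ⟨[], by simp, rfl⟩
    | cons S t ih =>
      intro hmem
      obtain ⟨lp, hlp1, hlp2⟩ := ih (fun P hP => hmem P (List.mem_cons_of_mem S hP))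
      obtain ⟨A, σ, hA, hσ, rfl⟩ := hmemE S (hmem S List.mem_cons_self)
      refine ⟨(A, σ) :: lp, ?_, by rw [List.map_cons, ← hlp2]⟩
      intro p hp
      rcases List.mem_cons.1 hp with rfl | hp
      · exact ⟨hA, hσ⟩
      · exact hlp1 p hp
  obtain ⟨lp, hlp1, hlp2⟩ := extract l'' h''mem
  have hg : selMat (fun a => lp.foldl (fun x p => p.2 x) a)
      = Matrix.of fun _ c => if c = i₁ then (1 : ℝ) else 0 := by
    rw [← h''prod, hlp2]
    rw [show lp.map (fun p => selMat p.2) = (lp.map Prod.snd).map selMat by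
      rw [List.map_map]; rfl, selMat_prod]
    have hff : (fun a => (lp.map Prod.snd).foldl (fun x g => g x) a)
        = fun a => lp.foldl (fun x p => p.2 x) a := by
      funext a; rw [List.foldl_map]
    rw [hff]
  have hconst : ∀ a, lp.foldl (fun x p => p.2 x) a = i₁ := by
    intro a
    have := congrFun (congrFun hg a) (lp.foldl (fun x p => p.2 x) a)
    rw [show selMat (fun a => lp.foldl (fun x p => p.2 x) a) a
        (lp.foldl (fun x p => p.2 x) a) = (1:ℝ) from if_pos rfl] at this
    by_contra hne
    rw [show (Matrix.of fun _ c => if c = i₁ then (1:ℝ) else 0) a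
        (lp.foldl (fun x p => p.2 x) a)
        = if lp.foldl (fun x p => p.2 x) a = i₁ then (1:ℝ) else 0 from rfl,
      if_neg hne] at this
    norm_num at this
  have hlpne : lp ≠ [] := by
    intro h
    rw [h] at hlp2
    exact h''ne (by simpa using hlp2)
  refine ⟨lp.map Prod.fst, ?_, ?_, ?_, i₁, ?_⟩
  · intro P hP
    obtain ⟨p, hp, rfl⟩ := List.mem_map.1 hP
    exact (hlp1 p hp).1
  · intro h
    exact hlpne (List.map_eq_nil_iff.1 h)
  · rw [List.length_map]
    rw [hlp2, List.length_map] at h''len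
    exact h''len
  · intro a
    have := prodColPos M hpos lp hlp1 a
    rwa [hconst a] at this

end Stmt12Aux

theorem stmt12 (n : ℕ) (hn : 0 < n) (f : ℕ → ℕ)
    (hf : ∀ M' : Finset (Matrix (Fin n) (Fin n) ℝ),
      (∀ A ∈ M', ∀ i j, A i j = 0 ∨ A i j = 1) →
      (∀ A ∈ M', ∀ i, ∃! j, A i j = 1) →
      (∃ l : List (Matrix (Fin n) (Fin n) ℝ), (∀ P ∈ l, P ∈ M') ∧ l ≠ [] ∧
        ∃ i : Fin n, l.prod = Matrix.of fun _ c => if c = i then (1 : ℝ) else 0) →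
      ∃ l : List (Matrix (Fin n) (Fin n) ℝ), (∀ P ∈ l, P ∈ M') ∧ l ≠ [] ∧
        l.length ≤ f n ∧
        ∃ i : Fin n, l.prod = Matrix.of fun _ c => if c = i then (1 : ℝ) else 0)
    (M : Finset (Matrix (Fin n) (Fin n) ℝ))
    (hpos : ∀ A ∈ M, ∀ i j, 0 ≤ A i j)
    (hrow : ∀ A ∈ M, ∀ i, ∃ j, 0 < A i j)
    (hcol : ∀ A ∈ M, ∀ j, ∃ i, 0 < A i j)
    (hprim : ∃ l : List (Matrix (Fin n) (Fin n) ℝ),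
      (∀ P ∈ l, P ∈ M) ∧ l ≠ [] ∧ ∀ i j, 0 < l.prod i j) :
    ∃ l : List (Matrix (Fin n) (Fin n) ℝ),
      (∀ P ∈ l, P ∈ M) ∧ l ≠ [] ∧ l.length ≤ 2 * f n + n - 1 ∧
      ∀ i j, 0 < l.prod i j := by
  classical
  obtain ⟨B₁, hB₁mem, hB₁ne, hB₁len, c₁, hB₁col⟩ :=
    Stmt12Aux.colLemma hn f hf M hpos hrow hprim
  set M₂ : Finset (Matrix (Fin n) (Fin n) ℝ) := M.image Matrix.transpose with hM₂
  have hpos₂ : ∀ A ∈ M₂, ∀ i j, 0 ≤ A i j := by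
    intro A hA i j
    obtain ⟨B, hB, rfl⟩ := Finset.mem_image.1 hA
    exact hpos B hB j i
  have hrow₂ : ∀ A ∈ M₂, ∀ i, ∃ j, 0 < A i j := by
    intro A hA i
    obtain ⟨B, hB, rfl⟩ := Finset.mem_image.1 hA
    exact hcol B hB i
  obtain ⟨lP, hlPm, hlPne, hlPpos⟩ := hprim
  have hprim₂ : ∃ l : List (Matrix (Fin n) (Fin n) ℝ),
      (∀ P ∈ l, P ∈ M₂) ∧ l ≠ [] ∧ ∀ i j, 0 < l.prod i j := by
    refine ⟨(lP.map Matrix.transpose).reverse, ?_, ?_, ?_⟩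
    · intro P hP
      rw [List.mem_reverse] at hP
      obtain ⟨B, hB, rfl⟩ := List.mem_map.1 hP
      exact Finset.mem_image.2 ⟨B, hlPm B hB, rfl⟩
    · intro h
      rw [List.reverse_eq_nil_iff, List.map_eq_nil_iff] at h
      exact hlPne h
    · intro i j
      rw [← Matrix.transpose_list_prod]
      exact hlPpos j i
  obtain ⟨l₂, hl₂mem, hl₂ne, hl₂len, c₂, hl₂col⟩ :=
    Stmt12Aux.colLemma hn f hf M₂ hpos₂ hrow₂ hprim₂
  set B₂ : List (Matrix (Fin n) (Fin n) ℝ) := (l₂.map Matrix.transpose).reverse with hB₂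
  have hB₂mem : ∀ P ∈ B₂, P ∈ M := by
    intro P hP
    rw [hB₂, List.mem_reverse] at hP
    obtain ⟨Q, hQ, rfl⟩ := List.mem_map.1 hP
    obtain ⟨A, hA, rfl⟩ := Finset.mem_image.1 (hl₂mem Q hQ)
    rwa [Matrix.transpose_transpose]
  have hB₂prod : B₂.prod = (l₂.prod)ᵀ := (Matrix.transpose_list_prod l₂).symm
  have hB₂row : ∀ b, 0 < B₂.prod c₂ b := by
    intro b
    rw [hB₂prod]
    exact hl₂col b
  obtain ⟨lC, hlCmem, hlClen, hlCpos⟩ :=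
    Stmt12Aux.reachShort hn M hpos c₁ c₂ ⟨lP, hlPm, hlPpos c₁ c₂⟩
  have hnnB₁ : ∀ i j, 0 ≤ B₁.prod i j :=
    Stmt12Aux.listProdNonneg B₁ (fun A hA => hpos A (hB₁mem A hA))
  have hnnlC : ∀ i j, 0 ≤ lC.prod i j :=
    Stmt12Aux.listProdNonneg lC (fun A hA => hpos A (hlCmem A hA))
  have hnnB₂ : ∀ i j, 0 ≤ B₂.prod i j :=
    Stmt12Aux.listProdNonneg B₂ (fun A hA => hpos A (hB₂mem A hA))
  refine ⟨B₁ ++ lC ++ B₂, ?_, ?_, ?_, ?_⟩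
  · intro P hP
    rcases List.mem_append.1 hP with hP | hP
    · rcases List.mem_append.1 hP with hP | hP
      · exact hB₁mem P hP
      · exact hlCmem P hP
    · exact hB₂mem P hP
  · intro h
    rw [List.append_eq_nil_iff, List.append_eq_nil_iff] at h
    exact hB₁ne h.1.1
  · have hlenB₂ : B₂.length ≤ f n := by
      rw [hB₂, List.length_reverse, List.length_map]
      exact hl₂len
    simp only [List.length_append]
    omega
  · intro a b
    rw [List.prod_append, List.prod_append]
    have hmid : 0 < (lC.prod * B₂.prod) c₁ b :=
      Stmt12Aux.mulPos hnnlC hnnB₂ hlCpos (hB₂row b)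
    have h1 : 0 < (B₁.prod * (lC.prod * B₂.prod)) a b :=
      Stmt12Aux.mulPos hnnB₁
        (fun i j => by
          rw [Matrix.mul_apply]
          exact Finset.sum_nonneg fun k _ => mul_nonneg (hnnlC i k) (hnnB₂ k j))
        (hB₁col a) hmid
    rwa [← mul_assoc] at h1
end

section
/- Every primitive set of n×n nonnegative matrices with no zero rows or columns admits a positive product of length at most (n(7n² + 6n + 8) − 24)/24, assuming every synchronizing automaton on n states has a synchronizing word of length at most n(7n² + 6n − 16)/48. -/
open Matrix

section Aux
variable {n : ℕ}

/-- The 0/1 matrix of a function (deterministic automaton letter). -/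
private def sel (f : Fin n → Fin n) : Matrix (Fin n) (Fin n) ℝ :=
  Matrix.of fun i j => if j = f i then 1 else 0

private lemma sel_apply (f : Fin n → Fin n) (i j : Fin n) :
    sel f i j = if j = f i then 1 else 0 := rfl

private lemma sel_id : sel (fun i : Fin n => i) = 1 := by
  ext i j; simp [sel, Matrix.one_apply, eq_comm]

private lemma sel_mul_apply (f : Fin n → Fin n) (B : Matrix (Fin n) (Fin n) ℝ) (i k : Fin n) :
    (sel f * B) i k = B (f i) k := by
  rw [Matrix.mul_apply]
  rw [Finset.sum_eq_single (f i)]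
  · simp [sel_apply]
  · intro b _ hb; simp [sel_apply, hb]
  · intro h; exact absurd (Finset.mem_univ _) h

private lemma sel_mul_sel (f g : Fin n → Fin n) : sel f * sel g = sel (g ∘ f) := by
  ext i k
  rw [sel_mul_apply]
  rfl

private lemma prod_nonneg_entry (l : List (Matrix (Fin n) (Fin n) ℝ))
    (h : ∀ A ∈ l, ∀ i j, 0 ≤ A i j) : ∀ i j, 0 ≤ l.prod i j := by
  induction l with
  | nil =>
    intro i j
    rw [List.prod_nil, Matrix.one_apply]
    split <;> norm_num
  | cons A t ih =>
    intro i j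
    rw [List.prod_cons, Matrix.mul_apply]
    exact Finset.sum_nonneg fun k _ =>
      mul_nonneg (h A (by simp) i k) (ih (fun B hB => h B (by simp [hB])) k j)

private lemma mul_pos_entry {A B : Matrix (Fin n) (Fin n) ℝ}
    (hA : ∀ i j, 0 ≤ A i j) (hB : ∀ i j, 0 ≤ B i j) {i j k : Fin n}
    (h1 : 0 < A i j) (h2 : 0 < B j k) : 0 < (A * B) i k := by
  rw [Matrix.mul_apply]
  refine lt_of_lt_of_le (mul_pos h1 h2) ?_
  exact Finset.single_le_sum (fun b _ => mul_nonneg (hA i b) (hB b k)) (Finset.mem_univ j)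

private lemma mul_pos_entry_decomp {A B : Matrix (Fin n) (Fin n) ℝ}
    (hA : ∀ i j, 0 ≤ A i j) (hB : ∀ i j, 0 ≤ B i j) {i k : Fin n}
    (h : 0 < (A * B) i k) : ∃ j, 0 < A i j ∧ 0 < B j k := by
  rw [Matrix.mul_apply] at h
  by_contra hc
  push_neg at hc
  have hz : ∑ j, A i j * B j k = 0 := by
    refine Finset.sum_eq_zero fun j _ => ?_
    rcases lt_or_eq_of_le (hA i j) with hp | hz'
    · have : B j k = 0 := le_antisymm (hc j hp) (hB j k)
      rw [this, mul_zero]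
    · rw [← hz', zero_mul]
  rw [hz] at h
  exact lt_irrefl 0 h

private noncomputable def selSet (M : Finset (Matrix (Fin n) (Fin n) ℝ)) :
    Finset (Matrix (Fin n) (Fin n) ℝ) :=
  ((Finset.univ.filter (fun f : Fin n → Fin n => ∃ A ∈ M, ∀ i, 0 < A i (f i))).image sel)

private lemma sel_mem_selSet {M : Finset (Matrix (Fin n) (Fin n) ℝ)} {f : Fin n → Fin n}
    (h : ∃ A ∈ M, ∀ i, 0 < A i (f i)) : sel f ∈ selSet M :=
  Finset.mem_image.mpr ⟨f, Finset.mem_filter.mpr ⟨Finset.mem_univ _, h⟩, rfl⟩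

private lemma mem_selSet {M : Finset (Matrix (Fin n) (Fin n) ℝ)} {P : Matrix (Fin n) (Fin n) ℝ}
    (h : P ∈ selSet M) : ∃ f : Fin n → Fin n, (∃ A ∈ M, ∀ i, 0 < A i (f i)) ∧ P = sel f := by
  obtain ⟨f, hf, rfl⟩ := Finset.mem_image.mp h
  exact ⟨f, (Finset.mem_filter.mp hf).2, rfl⟩


/-- From a product of `M` driving everyone into `T`, build a word of selection matrices
driving everyone into `T`. -/
private lemma part1 {M : Finset (Matrix (Fin n) (Fin n) ℝ)}
    (hpos : ∀ A ∈ M, ∀ i j, 0 ≤ A i j) (hrow : ∀ A ∈ M, ∀ i, ∃ j, 0 < A i j) :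
    ∀ l : List (Matrix (Fin n) (Fin n) ℝ), (∀ A ∈ l, A ∈ M) → ∀ T : Finset (Fin n),
      (∀ i, ∃ j ∈ T, 0 < l.prod i j) →
      ∃ l' : List (Matrix (Fin n) (Fin n) ℝ), (∀ P ∈ l', P ∈ selSet M) ∧
        l'.length = l.length ∧ ∃ g : Fin n → Fin n, l'.prod = sel g ∧ ∀ i, g i ∈ T := by
  intro l
  induction l using List.reverseRecOn with
  | nil =>
    intro _ T hT
    refine ⟨[], by simp, by simp, fun i => i, sel_id.symm, fun i => ?_⟩
    obtain ⟨j, hjT, hj⟩ := hT i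
    have : i = j := by
      by_contra hne
      rw [List.prod_nil, Matrix.one_apply_ne hne] at hj
      exact lt_irrefl 0 hj
    rwa [this]
  | append_singleton l A ih =>
    intro hmem T hT
    have hAM : A ∈ M := hmem A (by simp)
    have hlM : ∀ B ∈ l, B ∈ M := fun B hB => hmem B (by simp [hB])
    have hlnn : ∀ i j, 0 ≤ l.prod i j := prod_nonneg_entry l (fun B hB => hpos B (hlM B hB))
    classical
    set T' : Finset (Fin n) := Finset.univ.filter (fun k => ∃ j ∈ T, 0 < A k j) with hT'
    have hT'mem : ∀ k, k ∈ T' ↔ ∃ j ∈ T, 0 < A k j := by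
      intro k; simp [hT']
    have hstep : ∀ i, ∃ k ∈ T', 0 < l.prod i k := by
      intro i
      obtain ⟨j, hjT, hj⟩ := hT i
      rw [List.prod_append, List.prod_singleton] at hj
      obtain ⟨k, hk1, hk2⟩ := mul_pos_entry_decomp hlnn (hpos A hAM) hj
      exact ⟨k, (hT'mem k).mpr ⟨j, hjT, hk2⟩, hk1⟩
    obtain ⟨l'', hl''mem, hl''len, g'', hg''prod, hg''T⟩ := ih hlM T' hstep
    have hf : ∀ k : Fin n, ∃ j, 0 < A k j ∧ (k ∈ T' → j ∈ T) := by
      intro k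
      by_cases hk : k ∈ T'
      · obtain ⟨j, hjT, hj⟩ := (hT'mem k).mp hk
        exact ⟨j, hj, fun _ => hjT⟩
      · obtain ⟨j, hj⟩ := hrow A hAM k
        exact ⟨j, hj, fun h => absurd h hk⟩
    choose f hf1 hf2 using hf
    refine ⟨l'' ++ [sel f], ?_, by simp [hl''len], f ∘ g'', ?_, fun i => hf2 _ (hg''T i)⟩
    · intro P hP
      rcases List.mem_append.mp hP with h | h
      · exact hl''mem P h
      · rw [List.mem_singleton.mp h]
        exact sel_mem_selSet ⟨A, hAM, hf1⟩
    · rw [List.prod_append, List.prod_singleton, hg''prod, sel_mul_sel]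

/-- Lift a word of selection matrices back to matrices of `M`, preserving positivity. -/
private lemma part2 {M : Finset (Matrix (Fin n) (Fin n) ℝ)}
    (hpos : ∀ A ∈ M, ∀ i j, 0 ≤ A i j) :
    ∀ l' : List (Matrix (Fin n) (Fin n) ℝ), (∀ P ∈ l', P ∈ selSet M) →
      ∃ lQ : List (Matrix (Fin n) (Fin n) ℝ), (∀ P ∈ lQ, P ∈ M) ∧ lQ.length = l'.length ∧
        ∀ r c, 0 < l'.prod r c → 0 < lQ.prod r c := by
  intro l'
  induction l' with
  | nil => exact fun _ => ⟨[], by simp, rfl, by simp⟩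
  | cons P t ih =>
    intro hmem
    obtain ⟨f, ⟨A, hAM, hAf⟩, rfl⟩ := mem_selSet (hmem P (by simp))
    obtain ⟨tQ, htQmem, htQlen, htQpos⟩ := ih (fun Q hQ => hmem Q (by simp [hQ]))
    refine ⟨A :: tQ, ?_, by simp [htQlen], ?_⟩
    · intro Q hQ
      rcases List.mem_cons.mp hQ with h | h
      · rw [h]; exact hAM
      · exact htQmem Q h
    · intro r c h
      rw [List.prod_cons, sel_mul_apply] at h
      rw [List.prod_cons]
      exact mul_pos_entry (hpos A hAM)
        (prod_nonneg_entry tQ (fun B hB => hpos B (htQmem B hB)))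
        (hAf r) (htQpos _ _ h)


private lemma revmapT_prod : ∀ l : List (Matrix (Fin n) (Fin n) ℝ),
    ((l.reverse).map Matrix.transpose).prod = l.prodᵀ := by
  intro l
  induction l with
  | nil => simp
  | cons A t ih =>
    rw [List.reverse_cons, List.map_append, List.prod_append, ih, List.prod_cons,
      Matrix.transpose_mul]
    simp

/-- Reachability: a short connecting product. -/
private lemma part3 {M : Finset (Matrix (Fin n) (Fin n) ℝ)} (hn : 0 < n)
    (hpos : ∀ A ∈ M, ∀ i j, 0 ≤ A i j)
    (l₀ : List (Matrix (Fin n) (Fin n) ℝ)) (hl₀ : ∀ A ∈ l₀, A ∈ M)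
    (hl₀pos : ∀ i j, 0 < l₀.prod i j) (i j : Fin n) :
    ∃ lX : List (Matrix (Fin n) (Fin n) ℝ), (∀ P ∈ lX, P ∈ M) ∧ lX.length ≤ n - 1 ∧
      0 < lX.prod i j := by
  classical
  let R : ℕ → Finset (Fin n) := fun k => Nat.rec {i}
    (fun _ Rk => Rk ∪ Finset.univ.filter (fun b => ∃ a ∈ Rk, ∃ A ∈ M, 0 < A a b)) k
  have hR0 : R 0 = {i} := rfl
  have hRsucc' : ∀ k, R (k + 1) = (fun S : Finset (Fin n) =>
      S ∪ Finset.univ.filter (fun b => ∃ a ∈ S, ∃ A ∈ M, 0 < A a b)) (R k) := fun k => rfl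
  clear_value R
  have hRsucc : ∀ k, R (k + 1) =
      R k ∪ Finset.univ.filter (fun b => ∃ a ∈ R k, ∃ A ∈ M, 0 < A a b) := hRsucc'
  have hmono : ∀ k, R k ⊆ R (k + 1) := fun k => by
    rw [hRsucc]; exact Finset.subset_union_left
  have hmonoLe : ∀ k m, k ≤ m → R k ⊆ R m := by
    intro k m hkm
    induction m with
    | zero => rw [Nat.le_zero.mp hkm]
    | succ m ihm =>
      rcases Nat.lt_or_ge k (m + 1) with h | h
      · exact (ihm (Nat.lt_succ_iff.mp h)).trans (hmono m)
      · rw [Nat.le_antisymm hkm h]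
  have hstepR : ∀ k a b, a ∈ R k → (∃ A ∈ M, 0 < A a b) → b ∈ R (k + 1) := by
    intro k a b ha hA
    rw [hRsucc]
    exact Finset.mem_union_right _ (Finset.mem_filter.mpr ⟨Finset.mem_univ _, a, ha, hA⟩)
  have htoList : ∀ k, ∀ b ∈ R k, ∃ l : List (Matrix (Fin n) (Fin n) ℝ),
      (∀ P ∈ l, P ∈ M) ∧ l.length ≤ k ∧ 0 < l.prod i b := by
    intro k
    induction k with
    | zero =>
      intro b hb
      rw [hR0, Finset.mem_singleton] at hb
      exact ⟨[], by simp, le_refl _, by rw [List.prod_nil, hb, Matrix.one_apply_eq]; norm_num⟩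
    | succ k ihk =>
      intro b hb
      rw [hRsucc] at hb
      rcases Finset.mem_union.mp hb with h | h
      · obtain ⟨l, h1, h2, h3⟩ := ihk b h
        exact ⟨l, h1, h2.trans (Nat.le_succ k), h3⟩
      · obtain ⟨a, ha, A, hAM, hA⟩ := (Finset.mem_filter.mp h).2
        obtain ⟨l, h1, h2, h3⟩ := ihk a ha
        refine ⟨l ++ [A], ?_, by simp; omega, ?_⟩
        · intro P hP
          rcases List.mem_append.mp hP with h' | h'
          · exact h1 P h'
          · rw [List.mem_singleton.mp h']; exact hAM
        · rw [List.prod_append, List.prod_singleton]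
          exact mul_pos_entry (prod_nonneg_entry l (fun B hB => hpos B (h1 B hB)))
            (hpos A hAM) h3 hA
  have hfromPath : ∀ l : List (Matrix (Fin n) (Fin n) ℝ), (∀ P ∈ l, P ∈ M) →
      ∀ k a b, a ∈ R k → 0 < l.prod a b → b ∈ R (k + l.length) := by
    intro l
    induction l with
    | nil =>
      intro _ k a b ha hab
      have : a = b := by
        by_contra hne
        rw [List.prod_nil, Matrix.one_apply_ne hne] at hab
        exact lt_irrefl 0 hab
      simpa [← this] using ha
    | cons A t iht =>
      intro hmem k a b ha hab
      rw [List.prod_cons] at hab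
      have hAM : A ∈ M := hmem A (by simp)
      have htM : ∀ B ∈ t, B ∈ M := fun B hB => hmem B (by simp [hB])
      obtain ⟨c, hc1, hc2⟩ := mul_pos_entry_decomp (hpos A hAM)
        (prod_nonneg_entry t (fun B hB => hpos B (htM B hB))) hab
      have hcR : c ∈ R (k + 1) := hstepR k a c ha ⟨A, hAM, hc1⟩
      have := iht htM (k + 1) c b hcR hc2
      have harith : k + 1 + t.length = k + (A :: t).length := by
        simp [List.length_cons]; omega
      rwa [harith] at this
  have hstab : ∀ k, R (k + 1) ⊆ R k → ∀ m, R (k + m) ⊆ R k := by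
    intro k hsub m
    induction m with
    | zero => exact Finset.Subset.refl _
    | succ m ihm =>
      have : R (k + (m + 1)) = R ((k + m) + 1) := by ring_nf
      rw [this, hRsucc]
      intro b hb
      rcases Finset.mem_union.mp hb with h | h
      · exact ihm h
      · obtain ⟨a, ha, hA⟩ := (Finset.mem_filter.mp h).2
        exact hsub (hstepR k a b (ihm ha) hA)
  have hjR : j ∈ R l₀.length := by
    have := hfromPath l₀ hl₀ 0 i j (by rw [hR0]; exact Finset.mem_singleton_self i) (hl₀pos i j)
    simpa using this
  have hgoal : j ∈ R (n - 1) := by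
    rcases Classical.em (∃ k ≤ n - 1, R (k + 1) ⊆ R k) with hex | hex
    · obtain ⟨k, hk, hsub⟩ := hex
      rcases Nat.le_total l₀.length (n - 1) with h | h
      · exact hmonoLe _ _ h hjR
      · have hkL : k ≤ l₀.length := hk.trans h
        have : R l₀.length ⊆ R k := by
          have := hstab k hsub (l₀.length - k)
          rwa [Nat.add_sub_cancel' hkL] at this
        exact hmonoLe _ _ hk (this hjR)
    · push_neg at hex
      have hcard : ∀ k, k ≤ n - 1 → k + 1 ≤ (R k).card := by
        intro k
        induction k with
        | zero => intro _; rw [hR0]; simp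
        | succ k ihk =>
          intro hk
          have hk' : k ≤ n - 1 := by omega
          have h1 : k + 1 ≤ (R k).card := ihk hk'
          have hss : R k ⊂ R (k + 1) := ⟨hmono k, hex k hk'⟩
          have := Finset.card_lt_card hss
          omega
      have h1 : n ≤ (R (n - 1)).card := by
        have := hcard (n - 1) (le_refl _)
        omega
      have h2 : (R (n - 1)).card ≤ n := by
        have := Finset.card_le_univ (R (n - 1))
        simpa using this
      have : R (n - 1) = Finset.univ := by
        apply Finset.eq_univ_of_card
        simp
        omega
      rw [this]
      exact Finset.mem_univ j
  exact htoList (n - 1) j hgoal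


private lemma selSet_entries01 (M : Finset (Matrix (Fin n) (Fin n) ℝ)) :
    ∀ P ∈ selSet M, ∀ i j, P i j = 0 ∨ P i j = 1 := by
  intro P hP i j
  obtain ⟨f, _, rfl⟩ := mem_selSet hP
  rw [sel_apply]
  split <;> simp

private lemma selSet_uniq (M : Finset (Matrix (Fin n) (Fin n) ℝ)) :
    ∀ P ∈ selSet M, ∀ i, ∃! j, P i j = 1 := by
  intro P hP i
  obtain ⟨f, _, rfl⟩ := mem_selSet hP
  refine ⟨f i, by simp [sel_apply], ?_⟩
  intro y hy
  rw [sel_apply] at hy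
  by_contra hne
  rw [if_neg hne] at hy
  exact zero_ne_one hy

/-- Combined: from primitivity get (via the sync bound) a product with a positive column. -/
private lemma getColumn {M : Finset (Matrix (Fin n) (Fin n) ℝ)} (hn : 0 < n)
    (hpos : ∀ A ∈ M, ∀ i j, 0 ≤ A i j) (hrow : ∀ A ∈ M, ∀ i, ∃ j, 0 < A i j)
    (hsync : (∀ A ∈ selSet M, ∀ i j, A i j = 0 ∨ A i j = 1) →
      (∀ A ∈ selSet M, ∀ i, ∃! j, A i j = 1) →
      (∃ l : List (Matrix (Fin n) (Fin n) ℝ), (∀ P ∈ l, P ∈ selSet M) ∧ l ≠ [] ∧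
        ∃ i : Fin n, l.prod = Matrix.of fun _ c => if c = i then (1 : ℝ) else 0) →
      ∃ l : List (Matrix (Fin n) (Fin n) ℝ), (∀ P ∈ l, P ∈ selSet M) ∧ l ≠ [] ∧
        48 * l.length ≤ n * (7 * n ^ 2 + 6 * n - 16) ∧
        ∃ i : Fin n, l.prod = Matrix.of fun _ c => if c = i then (1 : ℝ) else 0)
    (l₀ : List (Matrix (Fin n) (Fin n) ℝ)) (hl₀M : ∀ A ∈ l₀, A ∈ M) (hl₀ne : l₀ ≠ [])
    (hl₀pos : ∀ i j, 0 < l₀.prod i j) :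
    ∃ lQ : List (Matrix (Fin n) (Fin n) ℝ), (∀ P ∈ lQ, P ∈ M) ∧ 0 < lQ.length ∧
      48 * lQ.length ≤ n * (7 * n ^ 2 + 6 * n - 16) ∧ ∃ i₁, ∀ r, 0 < lQ.prod r i₁ := by
  have t₀ : Fin n := ⟨0, hn⟩
  have hword : ∃ l : List (Matrix (Fin n) (Fin n) ℝ), (∀ P ∈ l, P ∈ selSet M) ∧ l ≠ [] ∧
      ∃ i : Fin n, l.prod = Matrix.of fun _ c => if c = i then (1 : ℝ) else 0 := by
    obtain ⟨w, hwmem, hwlen, g, hwprod, hgT⟩ := part1 hpos hrow l₀ hl₀M {t₀}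
      (fun i => ⟨t₀, Finset.mem_singleton_self _, hl₀pos i t₀⟩)
    refine ⟨w, hwmem, ?_, t₀, ?_⟩
    · intro h
      rw [h] at hwlen
      exact hl₀ne (List.length_eq_zero_iff.mp hwlen.symm)
    · rw [hwprod]
      ext a b
      rw [sel_apply]
      rw [Finset.mem_singleton.mp (hgT a)]
      rfl
  obtain ⟨ls₁, hs₁mem, hs₁ne, hs₁len, i₁, hs₁prod⟩ :=
    hsync (selSet_entries01 M) (selSet_uniq M) hword
  obtain ⟨lQ, hQmem, hQlen, hQpos⟩ := part2 hpos ls₁ hs₁mem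
  refine ⟨lQ, hQmem, ?_, by rw [hQlen]; exact hs₁len, i₁, fun r => hQpos r i₁ ?_⟩
  · rw [hQlen]
    exact List.length_pos_iff.mpr hs₁ne
  · rw [hs₁prod]
    simp

end Aux

theorem stmt13 (n : ℕ) (hn : 0 < n)
    (hsync : ∀ M' : Finset (Matrix (Fin n) (Fin n) ℝ),
      (∀ A ∈ M', ∀ i j, A i j = 0 ∨ A i j = 1) →
      (∀ A ∈ M', ∀ i, ∃! j, A i j = 1) →
      (∃ l : List (Matrix (Fin n) (Fin n) ℝ), (∀ P ∈ l, P ∈ M') ∧ l ≠ [] ∧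
        ∃ i : Fin n, l.prod = Matrix.of fun _ c => if c = i then (1 : ℝ) else 0) →
      ∃ l : List (Matrix (Fin n) (Fin n) ℝ), (∀ P ∈ l, P ∈ M') ∧ l ≠ [] ∧
        48 * l.length ≤ n * (7 * n ^ 2 + 6 * n - 16) ∧
        ∃ i : Fin n, l.prod = Matrix.of fun _ c => if c = i then (1 : ℝ) else 0)
    (M : Finset (Matrix (Fin n) (Fin n) ℝ))
    (hpos : ∀ A ∈ M, ∀ i j, 0 ≤ A i j)
    (hrow : ∀ A ∈ M, ∀ i, ∃ j, 0 < A i j)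
    (hcol : ∀ A ∈ M, ∀ j, ∃ i, 0 < A i j)
    (hprim : ∃ l : List (Matrix (Fin n) (Fin n) ℝ),
      (∀ P ∈ l, P ∈ M) ∧ l ≠ [] ∧ ∀ i j, 0 < l.prod i j) :
    ∃ l : List (Matrix (Fin n) (Fin n) ℝ),
      (∀ P ∈ l, P ∈ M) ∧ l ≠ [] ∧
      24 * l.length ≤ n * (7 * n ^ 2 + 6 * n + 8) - 24 ∧
      ∀ i j, 0 < l.prod i j := by
  obtain ⟨l₀, hl₀M, hl₀ne, hl₀pos⟩ := hprim
  -- positive column from M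
  obtain ⟨lQ, hQmem, hQpos', hQlen, i₁, hQcol⟩ :=
    getColumn hn hpos hrow (hsync (selSet M)) l₀ hl₀M hl₀ne hl₀pos
  -- transpose side
  set M₂ := M.image Matrix.transpose with hM₂
  have h₂pos : ∀ A ∈ M₂, ∀ i j, 0 ≤ A i j := by
    intro A hA i j
    obtain ⟨B, hB, rfl⟩ := Finset.mem_image.mp hA
    exact hpos B hB j i
  have h₂row : ∀ A ∈ M₂, ∀ i, ∃ j, 0 < A i j := by
    intro A hA i
    obtain ⟨B, hB, rfl⟩ := Finset.mem_image.mp hA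
    obtain ⟨j, hj⟩ := hcol B hB i
    exact ⟨j, hj⟩
  have hl₂M : ∀ P ∈ l₀.reverse.map Matrix.transpose, P ∈ M₂ := by
    intro P hP
    obtain ⟨B, hB, rfl⟩ := List.mem_map.mp hP
    exact Finset.mem_image.mpr ⟨B, hl₀M B (List.mem_reverse.mp hB), rfl⟩
  have hl₂ne : l₀.reverse.map Matrix.transpose ≠ [] := by simp [hl₀ne]
  have hl₂pos : ∀ i j, 0 < (l₀.reverse.map Matrix.transpose).prod i j := by
    intro i j
    rw [revmapT_prod]
    exact hl₀pos j i
  obtain ⟨lQ₂, hQ₂mem, hQ₂pos', hQ₂len, i₂, hQ₂col⟩ :=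
    getColumn hn h₂pos h₂row (hsync (selSet M₂)) _ hl₂M hl₂ne hl₂pos
  set lR := lQ₂.reverse.map Matrix.transpose with hlR
  have hRmem : ∀ P ∈ lR, P ∈ M := by
    intro P hP
    obtain ⟨B, hB, rfl⟩ := List.mem_map.mp hP
    obtain ⟨C, hC, rfl⟩ := Finset.mem_image.mp (hQ₂mem B (List.mem_reverse.mp hB))
    simpa using hC
  have hRrow : ∀ c, 0 < lR.prod i₂ c := by
    intro c
    rw [hlR, revmapT_prod]
    exact hQ₂col c
  have hRlen : lR.length = lQ₂.length := by simp [hlR]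
  -- connector
  obtain ⟨lX, hXmem, hXlen, hXpos⟩ := part3 hn hpos l₀ hl₀M hl₀pos i₁ i₂
  have hQne : lQ ≠ [] := by
    intro h
    rw [h] at hQpos'
    exact lt_irrefl 0 hQpos'
  refine ⟨lQ ++ (lX ++ lR), ?_, ?_, ?_, ?_⟩
  · intro P hP
    rcases List.mem_append.mp hP with h | h
    · exact hQmem P h
    · rcases List.mem_append.mp h with h' | h'
      · exact hXmem P h'
      · exact hRmem P h'
  · intro h
    exact hQne (List.append_eq_nil_iff.mp h).1
  · have e1 : n * (7 * n ^ 2 + 6 * n - 16) = n * (7 * n ^ 2 + 6 * n) - 16 * n := by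
      rw [Nat.mul_sub, Nat.mul_comm n 16]
    have e2 : n * (7 * n ^ 2 + 6 * n + 8) = n * (7 * n ^ 2 + 6 * n) + 8 * n := by ring
    rw [e1] at hQlen hQ₂len
    rw [e2]
    have hlen : (lQ ++ (lX ++ lR)).length = lQ.length + (lX.length + lR.length) := by simp
    rw [hlen, hRlen]
    generalize n * (7 * n ^ 2 + 6 * n) = u at hQlen hQ₂len ⊢
    omega
  · intro r c
    rw [List.prod_append, List.prod_append]
    have hXnn := prod_nonneg_entry lX (fun B hB => hpos B (hXmem B hB))
    have hRnn := prod_nonneg_entry lR (fun B hB => hpos B (hRmem B hB))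
    have hQnn := prod_nonneg_entry lQ (fun B hB => hpos B (hQmem B hB))
    have h2 : ∀ a b, 0 ≤ (lX.prod * lR.prod) a b := by
      intro a b
      rw [Matrix.mul_apply]
      exact Finset.sum_nonneg fun k _ => mul_nonneg (hXnn a k) (hRnn k b)
    exact mul_pos_entry hQnn h2 (hQcol r)
      (mul_pos_entry hXnn hRnn hXpos (hRrow c))
end

section
/- If a finite set M of nonnegative matrices with no zero rows or columns is irreducible (no common nontrivial block-triangular structure), then for any i, j there exists a product C of matrices from M with C_{ij} > 0. -/
theorem stmt14 (n : ℕ) (M : Finset (Matrix (Fin n) (Fin n) ℝ)) (hM : M.Nonempty)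
    (hpos : ∀ A ∈ M, ∀ i j, 0 ≤ A i j)
    (hrow : ∀ A ∈ M, ∀ i, ∃ j, 0 < A i j)
    (hcol : ∀ A ∈ M, ∀ j, ∃ i, 0 < A i j)
    (hirr : ¬ ∃ N₁ N₂ : Finset (Fin n), N₁.Nonempty ∧ N₂.Nonempty ∧ Disjoint N₁ N₂ ∧
      N₁ ∪ N₂ = Finset.univ ∧ ∀ A ∈ M, ∀ i ∈ N₁, ∀ j ∈ N₂, A i j = 0) :
    ∀ i j : Fin n, ∃ l : List (Matrix (Fin n) (Fin n) ℝ),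
      (∀ P ∈ l, P ∈ M) ∧ l ≠ [] ∧ 0 < l.prod i j := by
  classical
  -- Nonnegativity of entries of products of matrices from M
  have hnn : ∀ l : List (Matrix (Fin n) (Fin n) ℝ), (∀ P ∈ l, P ∈ M) →
      ∀ i j, 0 ≤ l.prod i j := by
    intro l
    induction l with
    | nil =>
      intro _ i j
      rw [List.prod_nil]
      by_cases h : i = j <;> simp [Matrix.one_apply, h]
    | cons A t ih =>
      intro hmem i j
      rw [List.prod_cons, Matrix.mul_apply]
      apply Finset.sum_nonneg
      intro k _
      exact mul_nonneg (hpos A (hmem A (by simp)) i k)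
        (ih (fun P hP => hmem P (by simp [hP])) k j)
  intro i j
  -- Reachability from i
  set Reach : Fin n → Prop := fun k => ∃ l : List (Matrix (Fin n) (Fin n) ℝ),
      (∀ P ∈ l, P ∈ M) ∧ l ≠ [] ∧ 0 < l.prod i k with hReach
  set S : Finset (Fin n) := Finset.univ.filter Reach with hS
  have hmemS : ∀ k, k ∈ S ↔ Reach k := by
    intro k; simp [hS]
  -- S is nonempty
  have hS1 : S.Nonempty := by
    obtain ⟨A, hA⟩ := hM
    obtain ⟨k, hk⟩ := hrow A hA i
    refine ⟨k, (hmemS k).2 ⟨[A], ?_, ?_, ?_⟩⟩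
    · intro P hP; simp at hP; simp [hP, hA]
    · simp
    · simpa using hk
  -- S is closed under one more step
  have hclosed : ∀ p ∈ S, ∀ A ∈ M, ∀ q, 0 < A p q → q ∈ S := by
    intro p hp A hA q hApq
    obtain ⟨l, hl, hlne, hlpos⟩ := (hmemS p).1 hp
    refine (hmemS q).2 ⟨l ++ [A], ?_, ?_, ?_⟩
    · intro P hP
      rcases List.mem_append.1 hP with h | h
      · exact hl P h
      · simp at h; simpa [h] using hA
    · simp
    · rw [List.prod_append, List.prod_singleton, Matrix.mul_apply]
      apply Finset.sum_pos'
      · intro k _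
        exact mul_nonneg (hnn l hl i k) (hpos A hA k q)
      · exact ⟨p, Finset.mem_univ p, mul_pos hlpos hApq⟩
  -- S must be all of Fin n
  have hSuniv : S = Finset.univ := by
    by_contra hne
    have hSc : Sᶜ.Nonempty :=
      Finset.nonempty_iff_ne_empty.2 (fun h => hne ((Finset.compl_eq_empty_iff S).1 h))
    apply hirr
    refine ⟨S, Sᶜ, hS1, hSc, disjoint_compl_right, Finset.union_compl S, ?_⟩
    intro A hA p hp q hq
    by_contra hne0
    have hpos' : 0 < A p q := lt_of_le_of_ne (hpos A hA p q) (Ne.symm hne0)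
    exact (Finset.mem_compl.1 hq) (hclosed p hp A hA q hpos')
  have : j ∈ S := hSuniv ▸ Finset.mem_univ j
  exact (hmemS j).1 this
end

section
/- Consider the two n×n 0/1 matrices A_b (the cyclic shift: (A_b)_{i,j} = 1 iff j ≡ i+1 mod n) and A_a which equals the identity except it additionally has a 1 in entry (n,1) (i.e., edges i→i for all i plus n→1). Then the set {A_a, A_b} is primitive, but every entrywise positive product of these matrices has length at least n(n−1). -/
namespace Stmt16Aux

open Fin.CommRing

variable {n : ℕ}
variable (Ab Aa : Matrix (Fin n) (Fin n) ℝ)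

section Basic
variable (hAb : Ab = Matrix.of fun i j : Fin n => if (j : ℕ) = ((i : ℕ) + 1) % n then 1 else 0)
variable (hAa : Aa = Matrix.of fun i j : Fin n =>
      if i = j ∨ ((i : ℕ) = n - 1 ∧ (j : ℕ) = 0) then 1 else 0)

include hAb in
lemma posAb {i j : Fin n} : 0 < Ab i j ↔ (j : ℕ) = ((i : ℕ) + 1) % n := by
  subst hAb; simp only [Matrix.of_apply]; split <;> simp_all

include hAa in
lemma posAa {i j : Fin n} : 0 < Aa i j ↔ (i = j ∨ ((i : ℕ) = n - 1 ∧ (j : ℕ) = 0)) := by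
  subst hAa; simp only [Matrix.of_apply]; split <;> simp_all

include hAb in
lemma nonnegAb (i j : Fin n) : 0 ≤ Ab i j := by
  subst hAb; simp only [Matrix.of_apply]; split <;> norm_num

include hAa in
lemma nonnegAa (i j : Fin n) : 0 ≤ Aa i j := by
  subst hAa; simp only [Matrix.of_apply]; split <;> norm_num

include hAa hAb in
lemma nonnegProd (l : List (Matrix (Fin n) (Fin n) ℝ)) (hl : ∀ P ∈ l, P = Aa ∨ P = Ab) :
    ∀ i j, 0 ≤ l.prod i j := by
  induction l with
  | nil => intro i j; rw [List.prod_nil, Matrix.one_apply]; split <;> norm_num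
  | cons P t ih =>
    intro i j
    rw [List.prod_cons, Matrix.mul_apply]
    refine Finset.sum_nonneg fun k _ => mul_nonneg ?_
      (ih (fun Q hQ => hl Q (List.mem_cons_of_mem _ hQ)) k j)
    rcases hl P (List.mem_cons_self) with h | h
    · rw [h]; exact nonnegAa Aa hAa i k
    · rw [h]; exact nonnegAb Ab hAb i k

include hAa hAb in
lemma prodPos_cons (P : Matrix (Fin n) (Fin n) ℝ) (l : List (Matrix (Fin n) (Fin n) ℝ))
    (hP : P = Aa ∨ P = Ab) (hl : ∀ Q ∈ l, Q = Aa ∨ Q = Ab) {i j : Fin n}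
    (h : 0 < (P :: l).prod i j) : ∃ k, 0 < P i k ∧ 0 < l.prod k j := by
  rw [List.prod_cons, Matrix.mul_apply] at h
  by_contra hc
  push_neg at hc
  have hterm : ∀ k ∈ Finset.univ, P i k * l.prod k j ≤ 0 := by
    intro k _
    have h1 : 0 ≤ P i k := by
      rcases hP with h' | h'
      · rw [h']; exact nonnegAa Aa hAa i k
      · rw [h']; exact nonnegAb Ab hAb i k
    have h2 : 0 ≤ l.prod k j := nonnegProd Ab Aa hAb hAa l hl k j
    rcases lt_or_eq_of_le h1 with h1' | h1'
    · have h3 := hc k h1'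
      have : l.prod k j = 0 := le_antisymm h3 h2
      simp [this]
    · simp [← h1']
  have := Finset.sum_nonpos hterm
  linarith

lemma prodPos_append (l1 l2 : List (Matrix (Fin n) (Fin n) ℝ))
    (h1nn : ∀ i j, (0:ℝ) ≤ l1.prod i j) (h2nn : ∀ i j, (0:ℝ) ≤ l2.prod i j)
    {i k j : Fin n} (h1 : 0 < l1.prod i k) (h2 : 0 < l2.prod k j) :
    0 < (l1 ++ l2).prod i j := by
  rw [List.prod_append, Matrix.mul_apply]
  exact Finset.sum_pos' (fun m _ => mul_nonneg (h1nn i m) (h2nn m j))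
    ⟨k, Finset.mem_univ k, mul_pos h1 h2⟩

include hAa hAb in
lemma AaNeAb (hn : 2 ≤ n) : Aa ≠ Ab := by
  intro h
  haveI : NeZero n := ⟨by omega⟩
  have h0 := congrFun (congrFun h 0) 0
  rw [hAa, hAb] at h0
  simp only [Matrix.of_apply] at h0
  norm_num [Nat.mod_eq_of_lt (show 1 < n by omega)] at h0

include hAa hAb in
lemma key (hn : 2 ≤ n) :
    ∀ l : List (Matrix (Fin n) (Fin n) ℝ), (∀ P ∈ l, P = Aa ∨ P = Ab) →
    ∀ i j : Fin n, 0 < l.prod i j →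
    ∃ m : ℕ, m ≤ l.count Aa ∧
      ((j : ℕ) : ZMod n) = ((i : ℕ) : ZMod n) + (l.count Ab : ZMod n) + (m : ZMod n) ∧
      (m = 0 ∨ (m - 1) * (n - 1) + (n - 1 - (i : ℕ)) ≤ l.count Ab) := by
  intro l
  induction l with
  | nil =>
    intro _ i j h
    have hij : i = j := by
      by_contra hne
      rw [List.prod_nil, Matrix.one_apply_ne hne] at h
      exact lt_irrefl 0 h
    exact ⟨0, by simp, by simp [hij], Or.inl rfl⟩
  | cons P t ih =>
    intro hl i j h
    have hP := hl P (List.mem_cons_self)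
    have ht : ∀ Q ∈ t, Q = Aa ∨ Q = Ab := fun Q hQ => hl Q (List.mem_cons_of_mem _ hQ)
    obtain ⟨k, hPik, htk⟩ := prodPos_cons Ab Aa hAb hAa P t hP ht h
    obtain ⟨m, hm1, hm2, hm3⟩ := ih ht k j htk
    have hAaAb := AaNeAb Ab Aa hAb hAa hn
    rcases hP with hP | hP
    · -- P = Aa
      rw [hP] at hPik
      have hcA : (P :: t).count Aa = t.count Aa + 1 := by
        rw [hP, List.count_cons_self]
      have hcB : (P :: t).count Ab = t.count Ab := by
        rw [hP, List.count_cons_of_ne hAaAb]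
      rcases (posAa Aa hAa).mp hPik with hik | ⟨hi, hk⟩
      · -- stay
        refine ⟨m, ?_, ?_, ?_⟩
        · rw [hcA]; omega
        · rw [hcB, hik]; exact hm2
        · rw [hcB, hik]; exact hm3
      · -- jump : i.val = n-1, k.val = 0
        refine ⟨m + 1, ?_, ?_, ?_⟩
        · rw [hcA]; omega
        · rw [hcB, hi]
          rw [hk] at hm2
          have hcast : ((n - 1 : ℕ) : ZMod n) + 1 = 0 := by
            have h' : (((n - 1) + 1 : ℕ) : ZMod n) = ((n - 1 : ℕ) : ZMod n) + 1 := by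
              push_cast; ring
            rw [← h', show (n - 1) + 1 = n by omega, ZMod.natCast_self]
          rw [hm2]
          push_cast
          linear_combination -hcast
        · right
          rw [hcB, hi]
          have h2 : n - 1 - (n - 1) = 0 := by omega
          rw [h2, Nat.add_zero]
          have h3 : m + 1 - 1 = m := by omega
          rw [h3]
          rcases Nat.eq_zero_or_pos m with hm0 | hmpos
          · simp [hm0]
          · rcases hm3 with hm3 | hm3
            · omega
            · obtain ⟨m', rfl⟩ : ∃ m', m = m' + 1 := ⟨m - 1, by omega⟩
              have hmul : (m' + 1) * (n - 1) = m' * (n - 1) + (n - 1) := by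
                rw [Nat.succ_mul]
              rw [hk] at hm3
              have hm3' : m' * (n - 1) + (n - 1) ≤ List.count Ab t := by
                simpa using hm3
              generalize hq : m' * (n - 1) = q at hm3' hmul
              omega
    · -- P = Ab
      rw [hP] at hPik
      have hk := (posAb Ab hAb).mp hPik
      have hcA : (P :: t).count Aa = t.count Aa := by
        rw [hP, List.count_cons_of_ne (Ne.symm hAaAb)]
      have hcB : (P :: t).count Ab = t.count Ab + 1 := by
        rw [hP, List.count_cons_self]
      refine ⟨m, ?_, ?_, ?_⟩
      · rw [hcA]; exact hm1
      · rw [hcB]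
        have hcast : ((k : ℕ) : ZMod n) = ((i : ℕ) : ZMod n) + 1 := by
          rw [hk, ZMod.natCast_mod]
          push_cast
          ring
        rw [hm2, hcast]
        push_cast
        ring
      · rcases hm3 with hm3 | hm3
        · exact Or.inl hm3
        · right
          rw [hcB]
          have hi : (i : ℕ) < n := i.isLt
          have hd : n - 1 - (i : ℕ) ≤ (n - 1 - (k : ℕ)) + 1 := by
            rcases Nat.lt_or_ge ((i : ℕ) + 1) n with hlt | hge
            · rw [Nat.mod_eq_of_lt hlt] at hk; omega
            · have hin : (i : ℕ) + 1 = n := by omega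
              rw [hin, Nat.mod_self] at hk; omega
          generalize hq : (m - 1) * (n - 1) = q at hm3 ⊢
          omega


include hAa hAb in
lemma memBlocks (k : ℕ) :
    ∀ P ∈ (List.replicate k (List.replicate (n - 1) Ab ++ [Aa])).flatten, P = Aa ∨ P = Ab := by
  intro P hP
  rw [List.mem_flatten] at hP
  obtain ⟨L, hL, hPL⟩ := hP
  rw [List.eq_of_mem_replicate hL, List.mem_append] at hPL
  rcases hPL with hPL | hPL
  · exact Or.inr (List.eq_of_mem_replicate hPL)
  · simp at hPL; exact Or.inl hPL

include hAa hAb in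
lemma reach_rep (hn : 2 ≤ n) : ∀ (k : ℕ) (i : Fin n),
    haveI : NeZero n := ⟨by omega⟩
    0 < (List.replicate k Ab).prod i (i + (k : Fin n)) := by
  haveI : NeZero n := ⟨by omega⟩
  intro k
  induction k with
  | zero =>
    intro i
    simp [Matrix.one_apply]
  | succ k ih =>
    intro i
    have hrep : List.replicate (k + 1) Ab = [Ab] ++ List.replicate k Ab := rfl
    have htgt : i + ((k + 1 : ℕ) : Fin n) = (i + 1) + (k : Fin n) := by
      push_cast; ring
    rw [hrep, htgt]
    refine prodPos_append _ _ ?_ ?_ ?_ (ih (i + 1))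
    · intro a b
      rw [List.prod_singleton]
      exact nonnegAb Ab hAb a b
    · exact nonnegProd Ab Aa hAb hAa _ (fun P hP => Or.inr (List.eq_of_mem_replicate hP)) 
    · rw [List.prod_singleton]
      rw [posAb Ab hAb]
      rw [Fin.val_add]
      have h1 : ((1 : Fin n) : ℕ) = 1 := by
        rw [Fin.val_one']
        exact Nat.mod_eq_of_lt (by omega)
      rw [h1]

include hAa hAb in
lemma nonneg_blk (hn : 2 ≤ n) (i j : Fin n) :
    0 ≤ (List.replicate (n - 1) Ab ++ [Aa]).prod i j := by
  refine nonnegProd Ab Aa hAb hAa _ (fun P hP => ?_) i j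
  rw [List.mem_append] at hP
  rcases hP with hP | hP
  · exact Or.inr (List.eq_of_mem_replicate hP)
  · simp at hP; exact Or.inl hP

include hAa hAb in
lemma reach_blk_stay (hn : 2 ≤ n) (i : Fin n) :
    haveI : NeZero n := ⟨by omega⟩
    0 < (List.replicate (n - 1) Ab ++ [Aa]).prod i (i + ((n - 1 : ℕ) : Fin n)) := by
  haveI : NeZero n := ⟨by omega⟩
  refine prodPos_append _ _ ?_ ?_ (reach_rep Ab Aa hAb hAa hn (n - 1) i) ?_
  · exact nonnegProd Ab Aa hAb hAa _ (fun P hP => Or.inr (List.eq_of_mem_replicate hP))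
  · intro a b; rw [List.prod_singleton]; exact nonnegAa Aa hAa a b
  · rw [List.prod_singleton, posAa Aa hAa]
    exact Or.inl rfl

include hAa hAb in
lemma reach_blk_jump (hn : 2 ≤ n) :
    haveI : NeZero n := ⟨by omega⟩
    0 < (List.replicate (n - 1) Ab ++ [Aa]).prod (0 : Fin n) (0 : Fin n) := by
  haveI : NeZero n := ⟨by omega⟩
  refine prodPos_append _ _ ?_ ?_ (reach_rep Ab Aa hAb hAa hn (n - 1) 0) ?_
  · exact nonnegProd Ab Aa hAb hAa _ (fun P hP => Or.inr (List.eq_of_mem_replicate hP))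
  · intro a b; rw [List.prod_singleton]; exact nonnegAa Aa hAa a b
  · rw [List.prod_singleton, posAa Aa hAa]
    right
    constructor
    · rw [Fin.val_add]
      have h0 : ((0 : Fin n) : ℕ) = 0 := rfl
      rw [h0, Fin.val_natCast]
      simp [Nat.mod_eq_of_lt (show n - 1 < n by omega)]
    · rfl

include hAa hAb in
lemma reach_blocks_move (hn : 2 ≤ n) : ∀ (k : ℕ) (i : Fin n),
    haveI : NeZero n := ⟨by omega⟩
    0 < (List.replicate k (List.replicate (n - 1) Ab ++ [Aa])).flatten.prod i (i - (k : Fin n)) := by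
  haveI : NeZero n := ⟨by omega⟩
  intro k
  induction k with
  | zero => intro i; simp [Matrix.one_apply]
  | succ k ih =>
    intro i
    have hrep : List.replicate (k + 1) (List.replicate (n - 1) Ab ++ [Aa])
        = [List.replicate (n - 1) Ab ++ [Aa]] ++ List.replicate k (List.replicate (n - 1) Ab ++ [Aa]) := rfl
    rw [hrep, List.flatten_append]
    simp only [List.flatten_cons, List.flatten_nil, List.append_nil]
    have hmid : i + ((n - 1 : ℕ) : Fin n) = i - 1 := by
      have hc : ((n - 1 : ℕ) : Fin n) = -1 := by
        have h' : ((n - 1 : ℕ) : Fin n) + 1 = 0 := by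
          rw [show (1 : Fin n) = ((1 : ℕ) : Fin n) by push_cast; rfl, ← Nat.cast_add,
            show n - 1 + 1 = n by omega, Fin.natCast_self]
        exact eq_neg_of_add_eq_zero_left h'
      rw [hc]; ring
    have htgt : i - ((k + 1 : ℕ) : Fin n) = (i - 1) - (k : Fin n) := by
      push_cast; ring
    rw [htgt]
    refine prodPos_append _ _ (fun a b => nonneg_blk Ab Aa hAb hAa hn a b)
      (nonnegProd Ab Aa hAb hAa _ (memBlocks Ab Aa hAb hAa k)) ?_ (ih (i - 1))
    · have := reach_blk_stay Ab Aa hAb hAa hn i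
      rwa [hmid] at this

include hAa hAb in
lemma reach_blocks_loop (hn : 2 ≤ n) : ∀ (k : ℕ),
    haveI : NeZero n := ⟨by omega⟩
    0 < (List.replicate k (List.replicate (n - 1) Ab ++ [Aa])).flatten.prod (0 : Fin n) (0 : Fin n) := by
  haveI : NeZero n := ⟨by omega⟩
  intro k
  induction k with
  | zero => simp [Matrix.one_apply]
  | succ k ih =>
    have hrep : List.replicate (k + 1) (List.replicate (n - 1) Ab ++ [Aa])
        = [List.replicate (n - 1) Ab ++ [Aa]] ++ List.replicate k (List.replicate (n - 1) Ab ++ [Aa]) := rfl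
    rw [hrep, List.flatten_append]
    simp only [List.flatten_cons, List.flatten_nil, List.append_nil]
    exact prodPos_append _ _ (fun a b => nonneg_blk Ab Aa hAb hAa hn a b)
      (nonnegProd Ab Aa hAb hAa _ (memBlocks Ab Aa hAb hAa k))
      (reach_blk_jump Ab Aa hAb hAa hn) ih

include hAa hAb in
lemma existence (hn : 2 ≤ n) :
    ∃ l : List (Matrix (Fin n) (Fin n) ℝ),
        (∀ P ∈ l, P = Aa ∨ P = Ab) ∧ l ≠ [] ∧ ∀ i j, 0 < l.prod i j := by
  haveI : NeZero n := ⟨by omega⟩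
  set blk := List.replicate (n - 1) Ab ++ [Aa] with hblk
  refine ⟨(List.replicate (2 * n) blk).flatten, memBlocks Ab Aa hAb hAa (2 * n), ?_, ?_⟩
  · intro hnil
    have := congrArg List.length hnil
    rw [List.length_flatten] at this
    simp [hblk] at this
    omega
  · intro i j
    set r : ℕ := n - (j : ℕ) with hr
    set s : ℕ := 2 * n - (i : ℕ) - r with hs
    have hij : (i : ℕ) < n := i.isLt
    have hjj : (j : ℕ) < n := j.isLt
    have hsplit : 2 * n = (i : ℕ) + (s + r) := by omega
    have hdecomp : List.replicate (2 * n) blk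
        = List.replicate ((i : ℕ)) blk ++ (List.replicate s blk ++ List.replicate r blk) := by
      rw [← List.replicate_add, ← List.replicate_add, ← hsplit]
    rw [hdecomp, List.flatten_append, List.flatten_append]
    have h1 : 0 < (List.replicate ((i : ℕ)) blk).flatten.prod i 0 := by
      have := reach_blocks_move Ab Aa hAb hAa hn ((i : ℕ)) i
      rwa [Fin.cast_val_eq_self, sub_self] at this
    have h2 : 0 < (List.replicate s blk).flatten.prod (0 : Fin n) (0 : Fin n) :=
      reach_blocks_loop Ab Aa hAb hAa hn s
    have h3 : 0 < (List.replicate r blk).flatten.prod (0 : Fin n) j := by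
      have := reach_blocks_move Ab Aa hAb hAa hn r 0
      have hrj : (0 : Fin n) - ((r : ℕ) : Fin n) = j := by
        have hsum : ((r : ℕ) : Fin n) + ((j : ℕ) : Fin n) = 0 := by
          rw [← Nat.cast_add, show r + (j : ℕ) = n by omega, Fin.natCast_self]
        have : ((r : ℕ) : Fin n) = -(((j : ℕ)) : Fin n) := eq_neg_of_add_eq_zero_left hsum
        rw [this, Fin.cast_val_eq_self]
        ring
      rwa [hrj] at this
    have heq : (List.replicate s blk).flatten ++ (List.replicate r blk).flatten
        = (List.replicate (s + r) blk).flatten := by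
      rw [← List.flatten_append, ← List.replicate_add]
    refine prodPos_append _ _
      (nonnegProd Ab Aa hAb hAa _ (memBlocks Ab Aa hAb hAa _))
      (by rw [heq]; exact nonnegProd Ab Aa hAb hAa _ (memBlocks Ab Aa hAb hAa _))
      h1 ?_
    exact prodPos_append _ _
      (nonnegProd Ab Aa hAb hAa _ (memBlocks Ab Aa hAb hAa _))
      (nonnegProd Ab Aa hAb hAa _ (memBlocks Ab Aa hAb hAa _)) h2 h3

end Basic

lemma count_add_count_le {α : Type*} [DecidableEq α] (A B : α) (hne : A ≠ B)
    (l : List α) : l.count A + l.count B ≤ l.length := by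
  induction l with
  | nil => simp
  | cons P t ih =>
    simp only [List.count_cons, List.length_cons, beq_iff_eq]
    split_ifs with h1 h2
    · exact absurd (h1.symm.trans h2) hne
    · omega
    · omega
    · omega

end Stmt16Aux

theorem stmt16 (n : ℕ) (hn : 2 ≤ n)
    (Ab : Matrix (Fin n) (Fin n) ℝ)
    (hAb : Ab = Matrix.of fun i j : Fin n => if (j : ℕ) = ((i : ℕ) + 1) % n then 1 else 0)
    (Aa : Matrix (Fin n) (Fin n) ℝ)
    (hAa : Aa = Matrix.of fun i j : Fin n =>
      if i = j ∨ ((i : ℕ) = n - 1 ∧ (j : ℕ) = 0) then 1 else 0) :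
    (∃ l : List (Matrix (Fin n) (Fin n) ℝ),
        (∀ P ∈ l, P = Aa ∨ P = Ab) ∧ l ≠ [] ∧ ∀ i j, 0 < l.prod i j) ∧
    (∀ l : List (Matrix (Fin n) (Fin n) ℝ),
        (∀ P ∈ l, P = Aa ∨ P = Ab) → (∀ i j, 0 < l.prod i j) →
        n * (n - 1) ≤ l.length) := by

  constructor
  · exact Stmt16Aux.existence Ab Aa hAb hAa hn
  · intro l hl hpos
    haveI : NeZero n := ⟨by omega⟩
    have hkey := fun j : Fin n => Stmt16Aux.key Ab Aa hAb hAa hn l hl 0 j (hpos 0 j)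
    choose g hg1 hg2 hg3 using hkey
    have ginj : Function.Injective g := by
      intro a b hab
      have ha := hg2 a
      have hb := hg2 b
      rw [hab] at ha
      have hc : ((a : ℕ) : ZMod n) = ((b : ℕ) : ZMod n) := by rw [ha, hb]
      have hv := congrArg ZMod.val hc
      rw [ZMod.val_cast_of_lt a.isLt, ZMod.val_cast_of_lt b.isLt] at hv
      exact Fin.ext hv
    have hbig : ∃ j0 : Fin n, n - 1 ≤ g j0 := by
      by_contra hc
      push_neg at hc
      have hinj2 : Function.Injective
          (fun j : Fin n => (⟨g j, by have := hc j; omega⟩ : Fin (n - 1))) := by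
        intro a b hab
        exact ginj (congrArg Fin.val hab)
      have hcard := Fintype.card_le_of_injective _ hinj2
      simp only [Fintype.card_fin] at hcard
      omega
    obtain ⟨j0, hj0⟩ := hbig
    have h1 := hg1 j0
    have h3 := hg3 j0
    rcases h3 with h3 | h3
    · omega
    have h0v : ((0 : Fin n) : ℕ) = 0 := rfl
    rw [h0v] at h3
    have hcnt := Stmt16Aux.count_add_count_le Aa Ab (Stmt16Aux.AaNeAb Ab Aa hAb hAa hn) l
    obtain ⟨c, rfl⟩ : ∃ c, n = c + 2 := ⟨n - 2, by omega⟩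
    have e1 : c + 2 - 1 = c + 1 := rfl
    rw [e1] at h3 ⊢
    rw [Nat.sub_zero] at h3
    have hstep : c * (c + 1) ≤ (g j0 - 1) * (c + 1) :=
      Nat.mul_le_mul_right _ (by omega)
    have hrng : (c + 2) * (c + 1) = c * (c + 1) + (c + 1) + (c + 1) := by ring
    rw [hrng]
    generalize hq : (g j0 - 1) * (c + 1) = q at h3 hstep
    generalize hp : c * (c + 1) = p at hstep ⊢
    omega
end

section
/- The Černý automaton on n states, consisting of the cyclic shift permutation matrix and the matrix that fixes all states except mapping state n to state 1, is synchronizing, and (when regarded as a set of nonnegative matrices) is not primitive: no finite product of its two matrices is entrywise positive. -/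
namespace CernyAux

variable {n : ℕ}

/-- The 0/1 matrix of a function: row `i` has a single `1` in column `f i`. -/
def Fn (f : Fin n → Fin n) : Matrix (Fin n) (Fin n) ℝ :=
  Matrix.of fun i j => if j = f i then 1 else 0

lemma Fn_one : (Fn (id : Fin n → Fin n)) = 1 := by
  ext i j
  simp [Fn, Matrix.one_apply, eq_comm]

lemma Fn_mul (f g : Fin n → Fin n) : Fn f * Fn g = Fn (g ∘ f) := by
  ext i j
  simp only [Fn, Matrix.mul_apply, Matrix.of_apply, Function.comp]
  rw [Finset.sum_eq_single (f i)]
  · simp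
  · intro k _ hk
    simp [hk]
  · intro h
    exact absurd (Finset.mem_univ (f i)) h

lemma Fn_pow (f : Fin n → Fin n) (k : ℕ) : (Fn f) ^ k = Fn (f^[k]) := by
  induction k with
  | zero => simp [Fn_one]
  | succ k ih =>
    rw [pow_succ, ih, Fn_mul, ← Function.iterate_succ']

/-- The function of the reset letter `a`. -/
def fa (hn : 0 < n) : Fin n → Fin n :=
  fun i => if (i : ℕ) = n - 1 then ⟨0, hn⟩ else i

/-- The function of the cyclic letter `b`. -/
def fb (hn : 0 < n) : Fin n → Fin n :=
  fun i => ⟨((i : ℕ) + 1) % n, Nat.mod_lt _ hn⟩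

lemma fb_iterate (hn : 0 < n) (k : ℕ) (i : Fin n) :
    ((fb hn)^[k] i : ℕ) = ((i : ℕ) + k) % n := by
  induction k with
  | zero => simp [Nat.mod_eq_of_lt i.isLt]
  | succ k ih =>
    rw [Function.iterate_succ_apply', fb]
    simp only [ih]
    rw [Nat.mod_add_mod, Nat.add_assoc]

/-- The function `u = a ∘ b^[n-1]` subtracts one (truncated at 0). -/
lemma u_val (hn : 2 ≤ n) (h0 : 0 < n) (i : Fin n) :
    (((fa h0 ∘ (fb h0)^[n-1]) i : Fin n) : ℕ) = (i : ℕ) - 1 := by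
  simp only [Function.comp_apply]
  have hb := fb_iterate h0 (n - 1) i
  by_cases hi : (i : ℕ) = 0
  · have : (((fb h0)^[n-1] i : Fin n) : ℕ) = n - 1 := by
      rw [hb, hi]
      simp [Nat.mod_eq_of_lt (show n - 1 < n by omega)]
    simp [fa, this, hi]
  · have hlt : (i : ℕ) < n := i.isLt
    have : (((fb h0)^[n-1] i : Fin n) : ℕ) = (i : ℕ) - 1 := by
      rw [hb]
      have he : (i : ℕ) + (n - 1) = ((i : ℕ) - 1) + n := by omega
      rw [he, Nat.add_mod_right, Nat.mod_eq_of_lt (by omega)]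
    have hne : (((fb h0)^[n-1] i : Fin n) : ℕ) ≠ n - 1 := by
      rw [this]; omega
    simp only [fa, this]
    rw [if_neg (show ¬((i : ℕ) - 1 = n - 1) by omega)]
    exact this

lemma u_iterate (hn : 2 ≤ n) (h0 : 0 < n) (k : ℕ) (i : Fin n) :
    (((fa h0 ∘ (fb h0)^[n-1])^[k] i : Fin n) : ℕ) = (i : ℕ) - k := by
  induction k with
  | zero => simp
  | succ k ih =>
    rw [Function.iterate_succ_apply', u_val hn h0, ih]
    omega

end CernyAux

open CernyAux in
theorem stmt17 (n : ℕ) (hn : 2 ≤ n)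
    (B : Matrix (Fin n) (Fin n) ℝ)
    (hB : B = Matrix.of fun i j : Fin n => if (j : ℕ) = ((i : ℕ) + 1) % n then 1 else 0)
    (A : Matrix (Fin n) (Fin n) ℝ)
    (hA : A = Matrix.of fun i j : Fin n =>
      if ((i : ℕ) < n - 1 ∧ j = i) ∨ ((i : ℕ) = n - 1 ∧ (j : ℕ) = 0) then 1 else 0) :
    (∃ l : List (Matrix (Fin n) (Fin n) ℝ),
        (∀ P ∈ l, P = A ∨ P = B) ∧ l ≠ [] ∧
        ∃ i : Fin n, l.prod = Matrix.of fun _ c => if c = i then (1 : ℝ) else 0) ∧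
    ¬ ∃ l : List (Matrix (Fin n) (Fin n) ℝ),
        (∀ P ∈ l, P = A ∨ P = B) ∧ l ≠ [] ∧ ∀ i j, 0 < l.prod i j := by
  have h0 : 0 < n := by omega
  -- A and B are functional matrices
  have hAf : A = Fn (fa h0) := by
    rw [hA]
    ext i j
    simp only [Fn, Matrix.of_apply, fa]
    by_cases hi : (i : ℕ) = n - 1
    · have : ¬ ((i : ℕ) < n - 1) := by omega
      simp only [hi, this, false_and, false_or, and_true, if_pos rfl]
      congr 1
      simp [Fin.ext_iff, eq_comm]
    · have hlt : (i : ℕ) < n - 1 := by have := i.isLt; omega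
      simp only [hi, if_neg hi, hlt, true_and, false_and, or_false]
      simp
  have hBf : B = Fn (fb h0) := by
    rw [hB]
    ext i j
    simp only [Fn, Matrix.of_apply, fb]
    congr 1
    simp [Fin.ext_iff]
  constructor
  · -- synchronization
    refine ⟨(List.replicate (n - 1) (List.replicate (n - 1) B ++ [A])).flatten, ?_, ?_, ?_⟩
    · intro P hP
      simp only [List.mem_flatten, List.mem_replicate] at hP
      obtain ⟨L, ⟨-, rfl⟩, hP⟩ := hP
      simp only [List.mem_append, List.mem_replicate, List.mem_singleton] at hP
      rcases hP with ⟨-, rfl⟩ | rfl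
      · exact Or.inr rfl
      · exact Or.inl rfl
    · intro h
      rw [List.flatten_eq_nil_iff] at h
      have : (List.replicate (n - 1) B ++ [A]) ∈
          List.replicate (n - 1) (List.replicate (n - 1) B ++ [A]) := by
        rw [List.mem_replicate]
        exact ⟨by omega, rfl⟩
      have := h _ this
      simp at this
    · refine ⟨⟨0, h0⟩, ?_⟩
      rw [List.prod_flatten]
      rw [List.map_replicate, List.prod_replicate, List.prod_append,
        List.prod_replicate, List.prod_singleton, hAf, hBf, Fn_pow, Fn_mul, Fn_pow]
      have hconst : (fa h0 ∘ (fb h0)^[n-1])^[n-1] = fun _ => (⟨0, h0⟩ : Fin n) := by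
        funext i
        have := u_iterate hn h0 (n - 1) i
        have hi := i.isLt
        apply Fin.ext
        simpa using by rw [this]; omega
      rw [hconst]
      ext i j
      simp [Fn]
  · -- not primitive
    rintro ⟨l, hmem, -, hpos⟩
    have key : ∀ (m : List (Matrix (Fin n) (Fin n) ℝ)),
        (∀ P ∈ m, P = A ∨ P = B) → ∃ g : Fin n → Fin n, m.prod = Fn g := by
      intro m
      induction m with
      | nil => exact fun _ => ⟨id, by simp [Fn_one]⟩
      | cons P t ih =>
        intro hm
        obtain ⟨g, hg⟩ := ih (fun Q hQ => hm Q (List.mem_cons_of_mem _ hQ))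
        rcases hm P List.mem_cons_self with rfl | rfl
        · exact ⟨g ∘ fa h0, by rw [List.prod_cons, hg, hAf, Fn_mul]⟩
        · exact ⟨g ∘ fb h0, by rw [List.prod_cons, hg, hBf, Fn_mul]⟩
    obtain ⟨g, hg⟩ := key l hmem
    set i0 : Fin n := ⟨0, h0⟩
    set c : Fin n := if g i0 = ⟨0, h0⟩ then ⟨1, hn⟩ else ⟨0, h0⟩
    have hne : c ≠ g i0 := by
      by_cases h : g i0 = ⟨0, h0⟩
      · simp only [c, if_pos h, h]
        simp [Fin.ext_iff]
      · simp only [c, if_neg h]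
        exact fun hc => h hc.symm
    have := hpos i0 c
    rw [hg] at this
    simp only [Fn, Matrix.of_apply, if_neg hne] at this
    exact lt_irrefl 0 this
end

section
/- Let M be a finite set of nonnegative n×n matrices with no zero rows or columns. If some product B₁ of matrices from M has a strictly positive column i, some product B₂ has a strictly positive row j, and some product C satisfies C_{ij} > 0, then the product B₁CB₂ is entrywise positive; hence M is primitive. -/
lemma listprod_nonneg (n : ℕ) (l : List (Matrix (Fin n) (Fin n) ℝ))
    (h : ∀ A ∈ l, ∀ i j, 0 ≤ A i j) : ∀ r s, 0 ≤ l.prod r s := by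
  induction l with
  | nil =>
      intro r s
      simp only [List.prod_nil, Matrix.one_apply]
      split <;> norm_num
  | cons A t ih =>
      intro r s
      rw [List.prod_cons, Matrix.mul_apply]
      exact Finset.sum_nonneg fun k _ => mul_nonneg (h A (by simp) r k)
        (ih (fun B hB => h B (by simp [hB])) k s)

theorem stmt19 (n : ℕ) (M : Set (Matrix (Fin n) (Fin n) ℝ))
    (hpos : ∀ A ∈ M, ∀ i j, 0 ≤ A i j)
    (hrow : ∀ A ∈ M, ∀ i, ∃ j, 0 < A i j)
    (hcol : ∀ A ∈ M, ∀ j, ∃ i, 0 < A i j)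
    (b₁ b₂ c : List (Matrix (Fin n) (Fin n) ℝ))
    (hb₁ : ∀ P ∈ b₁, P ∈ M) (hb₂ : ∀ P ∈ b₂, P ∈ M) (hc : ∀ P ∈ c, P ∈ M)
    (hb₁ne : b₁ ≠ []) (hb₂ne : b₂ ≠ []) (hcne : c ≠ [])
    (i j : Fin n)
    (hcoli : ∀ r, 0 < b₁.prod r i)
    (hrowj : ∀ s, 0 < b₂.prod j s)
    (hCij : 0 < c.prod i j) :
    (∀ r s, 0 < (b₁.prod * c.prod * b₂.prod) r s) ∧
    ∃ l : List (Matrix (Fin n) (Fin n) ℝ),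
      (∀ P ∈ l, P ∈ M) ∧ l ≠ [] ∧ ∀ r s, 0 < l.prod r s := by
  have hb₁n := listprod_nonneg n b₁ (fun A hA => hpos A (hb₁ A hA))
  have hcn := listprod_nonneg n c (fun A hA => hpos A (hc A hA))
  have hb₂n := listprod_nonneg n b₂ (fun A hA => hpos A (hb₂ A hA))
  have key : ∀ r s, 0 < (b₁.prod * c.prod * b₂.prod) r s := by
    intro r s
    have h1 : 0 < (b₁.prod * c.prod) r j := by
      rw [Matrix.mul_apply]
      have : 0 < b₁.prod r i * c.prod i j := mul_pos (hcoli r) hCij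
      refine lt_of_lt_of_le this ?_
      exact Finset.single_le_sum (f := fun k => b₁.prod r k * c.prod k j)
        (fun k _ => mul_nonneg (hb₁n r k) (hcn k j)) (Finset.mem_univ i)
    rw [Matrix.mul_apply]
    have : 0 < (b₁.prod * c.prod) r j * b₂.prod j s := mul_pos h1 (hrowj s)
    refine lt_of_lt_of_le this ?_
    refine Finset.single_le_sum (f := fun k => (b₁.prod * c.prod) r k * b₂.prod k s)
      (fun k _ => mul_nonneg ?_ (hb₂n k s)) (Finset.mem_univ j)
    rw [Matrix.mul_apply]
    exact Finset.sum_nonneg fun m _ => mul_nonneg (hb₁n r m) (hcn m k)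
  refine ⟨key, b₁ ++ c ++ b₂, ?_, by simp [hb₁ne], ?_⟩
  · intro P hP
    simp only [List.mem_append] at hP
    rcases hP with (h | h) | h
    exacts [hb₁ P h, hc P h, hb₂ P h]
  · intro r s
    rw [List.prod_append, List.prod_append]
    exact key r s
end
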